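/- arXiv:1603.06210 — 6 statements merged into one kernel-verified Lean document; each statement's English description precedes it below -/
import Mathlib

section
/- Let f : ℝ → ℂ be a bounded function such that at every point x ∈ ℝ the one-sided limits f(x−) and f(x+) exist and are finite, and such that the limits lim_{x→−∞} f(x) and lim_{x→+∞} f(x) exist and are finite. Then for every ε > 0 there exist a function g : ℝ → ℂ and a finite set S ⊆ ℝ such that g is continuous at every point of ℝ ∖ S, g has finite one-sided limits at every point of S, g has finite limits at −∞ and +∞, and sup_{x∈ℝ} |f(x) − g(x)| ≤ 2ε. -/
open Filter Topology

noncomputable def stepApprox (f : ℝ → ℂ) (Ln Lp : ℂ) (P : Finset ℝ) : ℝ → ℂ := fun y =>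
  if y ∈ P then f y
  else if h1 : (P.filter (· < y)).Nonempty then
    if h2 : (P.filter (y < ·)).Nonempty then
      f (((P.filter (· < y)).max' h1 + (P.filter (y < ·)).min' h2) / 2)
    else Lp
  else Ln

lemma stepApprox_mem (f : ℝ → ℂ) (Ln Lp : ℂ) (P : Finset ℝ) {z : ℝ} (hz : z ∈ P) :
    stepApprox f Ln Lp P z = f z := by simp [stepApprox, hz]

lemma stepApprox_low (f : ℝ → ℂ) (Ln Lp : ℂ) (P : Finset ℝ) {z : ℝ}
    (hz : ∀ r ∈ P, z ≤ r) (hzP : z ∉ P) : stepApprox f Ln Lp P z = Ln := by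
  have h1 : ¬ (P.filter (· < z)).Nonempty := by
    rintro ⟨r, hr⟩
    rw [Finset.mem_filter] at hr
    exact absurd (hz r hr.1) (not_le.mpr hr.2)
  simp [stepApprox, hzP, h1]

lemma stepApprox_high (f : ℝ → ℂ) (Ln Lp : ℂ) (P : Finset ℝ) (hP : P.Nonempty) {z : ℝ}
    (hz : ∀ r ∈ P, r ≤ z) (hzP : z ∉ P) : stepApprox f Ln Lp P z = Lp := by
  obtain ⟨r0, hr0⟩ := hP
  have hr0z : r0 < z := lt_of_le_of_ne (hz r0 hr0) (fun h => hzP (h ▸ hr0))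
  have h1 : (P.filter (· < z)).Nonempty := ⟨r0, Finset.mem_filter.mpr ⟨hr0, hr0z⟩⟩
  have h2 : ¬ (P.filter (z < ·)).Nonempty := by
    rintro ⟨r, hr⟩
    rw [Finset.mem_filter] at hr
    exact absurd (hz r hr.1) (not_le.mpr hr.2)
  simp [stepApprox, hzP, h1, h2]

lemma stepApprox_gap (f : ℝ → ℂ) (Ln Lp : ℂ) (P : Finset ℝ) {p q : ℝ}
    (hp : p ∈ P) (hq : q ∈ P) (hgap : ∀ r ∈ P, r ≤ p ∨ q ≤ r) :
    ∀ z ∈ Set.Ioo p q, stepApprox f Ln Lp P z = f ((p + q) / 2) := by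
  intro z hz
  have hzP : z ∉ P := fun h => by
    rcases hgap z h with h' | h'
    · exact absurd hz.1 (not_lt.mpr h')
    · exact absurd hz.2 (not_lt.mpr h')
  have h1 : (P.filter (· < z)).Nonempty := ⟨p, Finset.mem_filter.mpr ⟨hp, hz.1⟩⟩
  have h2 : (P.filter (z < ·)).Nonempty := ⟨q, Finset.mem_filter.mpr ⟨hq, hz.2⟩⟩
  have hmax : (P.filter (· < z)).max' h1 = p := by
    refine le_antisymm (Finset.max'_le _ _ _ ?_)
      (Finset.le_max' (P.filter (· < z)) p (Finset.mem_filter.mpr ⟨hp, hz.1⟩))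
    intro r hr
    rw [Finset.mem_filter] at hr
    rcases hgap r hr.1 with h' | h'
    · exact h'
    · exact absurd (lt_trans hr.2 hz.2) (not_lt.mpr h')
  have hmin : (P.filter (z < ·)).min' h2 = q := by
    refine le_antisymm (Finset.min'_le (P.filter (z < ·)) q (Finset.mem_filter.mpr ⟨hq, hz.2⟩))
      (Finset.le_min' _ _ _ ?_)
    intro r hr
    rw [Finset.mem_filter] at hr
    rcases hgap r hr.1 with h' | h'
    · exact absurd (lt_trans hz.1 hr.2) (not_lt.mpr h')
    · exact h'
  simp [stepApprox, hzP, h1, h2, hmax, hmin]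

/-- A bounded function `f : ℝ → ℂ` with finite one-sided limits everywhere and
finite limits at `±∞` can, for any `ε > 0`, be approximated within `2ε` (in sup norm) by a
function `g` which is continuous off a finite set `S`, has finite one-sided limits at the points
of `S`, and has finite limits at `±∞`. -/
theorem stmt_1 (f : ℝ → ℂ) (C : ℝ) (hbd : ∀ x : ℝ, ‖f x‖ ≤ C)
    (fm fp : ℝ → ℂ)
    (hfm : ∀ x : ℝ, Tendsto f (nhdsWithin x (Set.Iio x)) (𝓝 (fm x)))
    (hfp : ∀ x : ℝ, Tendsto f (nhdsWithin x (Set.Ioi x)) (𝓝 (fp x)))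
    (Lneg Lpos : ℂ)
    (hLneg : Tendsto f atBot (𝓝 Lneg))
    (hLpos : Tendsto f atTop (𝓝 Lpos))
    (ε : ℝ) (hε : 0 < ε) :
    ∃ (g : ℝ → ℂ) (S : Set ℝ), S.Finite ∧
      (∀ x ∉ S, ContinuousAt g x) ∧
      (∀ x ∈ S, (∃ l : ℂ, Tendsto g (nhdsWithin x (Set.Iio x)) (𝓝 l)) ∧
                (∃ l : ℂ, Tendsto g (nhdsWithin x (Set.Ioi x)) (𝓝 l))) ∧
      (∃ l : ℂ, Tendsto g atBot (𝓝 l)) ∧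
      (∃ l : ℂ, Tendsto g atTop (𝓝 l)) ∧
      (∀ x : ℝ, ‖f x - g x‖ ≤ 2 * ε) := by
  classical
  -- tail bounds
  obtain ⟨a, ha⟩ : ∃ a : ℝ, ∀ y ≤ a, ‖f y - Lneg‖ ≤ ε := by
    have h := hLneg (Metric.closedBall_mem_nhds Lneg hε)
    rw [Filter.mem_map, mem_atBot_sets] at h
    obtain ⟨a, ha⟩ := h
    exact ⟨a, fun y hy => by simpa [Metric.mem_closedBall, dist_eq_norm] using ha y hy⟩
  obtain ⟨b, hb⟩ : ∃ b : ℝ, ∀ y, b ≤ y → ‖f y - Lpos‖ ≤ ε := by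
    have h := hLpos (Metric.closedBall_mem_nhds Lpos hε)
    rw [Filter.mem_map, mem_atTop_sets] at h
    obtain ⟨b, hb⟩ := h
    exact ⟨b, fun y hy => by simpa [Metric.mem_closedBall, dist_eq_norm] using hb y hy⟩
  -- one-sided oscillation control
  have hδex : ∀ x : ℝ, ∃ δ : ℝ, 0 < δ ∧ (∀ y, x - δ < y → y < x → ‖f y - fm x‖ ≤ ε) ∧
      (∀ y, x < y → y < x + δ → ‖f y - fp x‖ ≤ ε) := by
    intro x
    have h1 := (hfm x) (Metric.closedBall_mem_nhds (fm x) hε)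
    rw [Filter.mem_map, mem_nhdsLT_iff_exists_Ioo_subset] at h1
    obtain ⟨l, hl, hlsub⟩ := h1
    have h2 := (hfp x) (Metric.closedBall_mem_nhds (fp x) hε)
    rw [Filter.mem_map, mem_nhdsGT_iff_exists_Ioo_subset] at h2
    obtain ⟨u, hu, husub⟩ := h2
    rw [Set.mem_Iio] at hl
    rw [Set.mem_Ioi] at hu
    refine ⟨min (x - l) (u - x), lt_min (by linarith) (by linarith), ?_, ?_⟩
    · intro y hy1 hy2
      have : y ∈ Set.Ioo l x := ⟨by
        have := min_le_left (x - l) (u - x); linarith, hy2⟩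
      have := hlsub this
      simpa [Metric.mem_closedBall, dist_eq_norm] using this
    · intro y hy1 hy2
      have : y ∈ Set.Ioo x u := ⟨hy1, by
        have := min_le_right (x - l) (u - x); linarith⟩
      have := husub this
      simpa [Metric.mem_closedBall, dist_eq_norm] using this
  choose δ hδpos hδl hδr using hδex
  -- compactness
  have hcov : Set.Icc a b ⊆ ⋃ x : ℝ, Set.Ioo (x - δ x) (x + δ x) := by
    intro z _
    exact Set.mem_iUnion.mpr ⟨z, by constructor <;> [linarith [hδpos z]; linarith [hδpos z]]⟩
  obtain ⟨t, ht⟩ := isCompact_Icc.elim_finite_subcover _ (fun x => isOpen_Ioo) hcov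
  set P : Finset ℝ := insert a (insert b
    (t ∪ t.image (fun x => x - δ x) ∪ t.image (fun x => x + δ x))) with hPdef
  have haP : a ∈ P := Finset.mem_insert_self _ _
  have hbP : b ∈ P := Finset.mem_insert_of_mem (Finset.mem_insert_self _ _)
  have htP : ∀ i ∈ t, i ∈ P ∧ (i - δ i) ∈ P ∧ (i + δ i) ∈ P := fun i hi =>
    ⟨Finset.mem_insert_of_mem (Finset.mem_insert_of_mem
        (Finset.mem_union_left _ (Finset.mem_union_left _ hi))),
     Finset.mem_insert_of_mem (Finset.mem_insert_of_mem
        (Finset.mem_union_left _ (Finset.mem_union_right _ (Finset.mem_image_of_mem _ hi)))),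
     Finset.mem_insert_of_mem (Finset.mem_insert_of_mem
        (Finset.mem_union_right _ (Finset.mem_image_of_mem _ hi)))⟩
  have hPne : P.Nonempty := ⟨a, haP⟩
  -- on each gap of P, f is within ε of a constant
  have key : ∀ p ∈ P, ∀ q ∈ P, p < q → (∀ r ∈ P, r ≤ p ∨ q ≤ r) →
      ∃ c : ℂ, ∀ z ∈ Set.Ioo p q, ‖f z - c‖ ≤ ε := by
    intro p hp q hq hpq hgap
    rcases hgap a haP with hap | hqa
    · rcases hgap b hbP with hbp | hqb
      · -- b ≤ p : high tail
        exact ⟨Lpos, fun z hz => hb z (le_of_lt (lt_of_le_of_lt hbp hz.1))⟩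
      · -- a ≤ p, q ≤ b : use the cover
        have hmid1 : p < (p + q) / 2 := by linarith
        have hmid2 : (p + q) / 2 < q := by linarith
        have hmid : (p + q) / 2 ∈ Set.Icc a b := ⟨by linarith, by linarith⟩
        obtain ⟨i, hit, hiIoo⟩ := Set.mem_iUnion₂.mp (ht hmid)
        obtain ⟨hiP, himP, hipP⟩ := htP i hit
        rw [Set.mem_Ioo] at hiIoo
        rcases lt_trichotomy ((p + q) / 2) i with h | h | h
        · -- mid < i, so f ≈ fm i on (p,q) ⊆ (i - δ i, i)
          have hqi : q ≤ i := by
            rcases hgap i hiP with h' | h'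
            · linarith
            · exact h'
          have himp : i - δ i ≤ p := by
            rcases hgap (i - δ i) himP with h' | h'
            · exact h'
            · linarith [hiIoo.1]
          exact ⟨fm i, fun z hz => hδl i z (by linarith [hz.1]) (by linarith [hz.2])⟩
        · exfalso
          rcases hgap i hiP with h' | h' <;> rw [← h] at h' <;> linarith
        · -- i < mid, so f ≈ fp i on (p,q) ⊆ (i, i + δ i)
          have hip : i ≤ p := by
            rcases hgap i hiP with h' | h'
            · exact h'
            · linarith
          have hipq : q ≤ i + δ i := by
            rcases hgap (i + δ i) hipP with h' | h'
            · linarith [hiIoo.2]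
            · exact h'
          exact ⟨fp i, fun z hz => hδr i z (by linarith [hz.1]) (by linarith [hz.2])⟩
    · -- q ≤ a : low tail
      exact ⟨Lneg, fun z hz => ha z (le_of_lt (lt_of_lt_of_le hz.2 hqa))⟩
  refine ⟨stepApprox f Lneg Lpos P, ↑P, P.finite_toSet, ?_, ?_, ?_, ?_, ?_⟩
  · -- continuity off P
    intro y hy
    rw [Finset.mem_coe] at hy
    by_cases h1 : (P.filter (· < y)).Nonempty
    · by_cases h2 : (P.filter (y < ·)).Nonempty
      · set p := (P.filter (· < y)).max' h1 with hp
        set q := (P.filter (y < ·)).min' h2 with hq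
        have hpP : p ∈ P := (Finset.mem_filter.mp ((P.filter (· < y)).max'_mem h1)).1
        have hpy : p < y := (Finset.mem_filter.mp ((P.filter (· < y)).max'_mem h1)).2
        have hqP : q ∈ P := (Finset.mem_filter.mp ((P.filter (y < ·)).min'_mem h2)).1
        have hyq : y < q := (Finset.mem_filter.mp ((P.filter (y < ·)).min'_mem h2)).2
        have hgap : ∀ r ∈ P, r ≤ p ∨ q ≤ r := by
          intro r hr
          rcases lt_trichotomy r y with h | h | h
          · exact Or.inl (Finset.le_max' (P.filter (· < y)) r (Finset.mem_filter.mpr ⟨hr, h⟩))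
          · exact absurd (h ▸ hr) hy
          · exact Or.inr (Finset.min'_le (P.filter (y < ·)) r (Finset.mem_filter.mpr ⟨hr, h⟩))
        have hconst := stepApprox_gap f Lneg Lpos P hpP hqP hgap
        exact continuousAt_const.congr (eventually_of_mem (Ioo_mem_nhds hpy hyq)
          (fun z hz => (hconst z hz).symm))
      · have hmax : ∀ r ∈ P, r ≤ y := fun r hr =>
          not_lt.mp (fun hc => h2 ⟨r, Finset.mem_filter.mpr ⟨hr, hc⟩⟩)
        have hmy : P.max' hPne < y :=
          lt_of_le_of_ne (hmax _ (P.max'_mem hPne)) (fun h => hy (h ▸ P.max'_mem hPne))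
        refine ContinuousAt.congr (continuousAt_const (y := Lpos))
          (eventually_of_mem (Ioi_mem_nhds hmy) (fun z hz => ?_))
        rw [Set.mem_Ioi] at hz
        exact (stepApprox_high f Lneg Lpos P hPne
          (fun r hr => le_of_lt (lt_of_le_of_lt (Finset.le_max' _ r hr) hz))
          (fun hc => absurd (Finset.le_max' _ z hc) (not_le.mpr hz))).symm
    · have hmin : ∀ r ∈ P, y ≤ r := fun r hr =>
        not_lt.mp (fun hc => h1 ⟨r, Finset.mem_filter.mpr ⟨hr, hc⟩⟩)
      have hmy : y < P.min' hPne :=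
        lt_of_le_of_ne (hmin _ (P.min'_mem hPne)) (fun h => hy (h ▸ P.min'_mem hPne))
      refine ContinuousAt.congr (continuousAt_const (y := Lneg))
        (eventually_of_mem (Iio_mem_nhds hmy) (fun z hz => ?_))
      rw [Set.mem_Iio] at hz
      exact (stepApprox_low f Lneg Lpos P
        (fun r hr => le_of_lt (lt_of_lt_of_le hz (Finset.min'_le _ r hr)))
        (fun hc => absurd (Finset.min'_le _ z hc) (not_le.mpr hz))).symm
  · -- one-sided limits at points of P
    intro x hx
    rw [Finset.mem_coe] at hx
    constructor
    · by_cases h1 : (P.filter (· < x)).Nonempty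
      · set p := (P.filter (· < x)).max' h1 with hp
        have hpP : p ∈ P := (Finset.mem_filter.mp ((P.filter (· < x)).max'_mem h1)).1
        have hpx : p < x := (Finset.mem_filter.mp ((P.filter (· < x)).max'_mem h1)).2
        have hgap : ∀ r ∈ P, r ≤ p ∨ x ≤ r := by
          intro r hr
          rcases lt_or_ge r x with h | h
          · exact Or.inl (Finset.le_max' (P.filter (· < x)) r (Finset.mem_filter.mpr ⟨hr, h⟩))
          · exact Or.inr h
        have hconst := stepApprox_gap f Lneg Lpos P hpP hx hgap
        exact ⟨f ((p + x) / 2), Tendsto.congr'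
          (eventuallyEq_of_mem (Ioo_mem_nhdsLT_of_mem ⟨hpx, le_refl x⟩)
            (fun z hz => (hconst z hz).symm)) tendsto_const_nhds⟩
      · have hxle : ∀ r ∈ P, x ≤ r := fun r hr =>
          not_lt.mp (fun hc => h1 ⟨r, Finset.mem_filter.mpr ⟨hr, hc⟩⟩)
        refine ⟨Lneg, Tendsto.congr'
          (eventuallyEq_of_mem self_mem_nhdsWithin (fun z hz => ?_)) tendsto_const_nhds⟩
        rw [Set.mem_Iio] at hz
        exact (stepApprox_low f Lneg Lpos P
          (fun r hr => le_of_lt (lt_of_lt_of_le hz (hxle r hr)))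
          (fun hc => absurd (hxle z hc) (not_le.mpr hz))).symm
    · by_cases h2 : (P.filter (x < ·)).Nonempty
      · set q := (P.filter (x < ·)).min' h2 with hq
        have hqP : q ∈ P := (Finset.mem_filter.mp ((P.filter (x < ·)).min'_mem h2)).1
        have hxq : x < q := (Finset.mem_filter.mp ((P.filter (x < ·)).min'_mem h2)).2
        have hgap : ∀ r ∈ P, r ≤ x ∨ q ≤ r := by
          intro r hr
          rcases le_or_gt r x with h | h
          · exact Or.inl h
          · exact Or.inr (Finset.min'_le (P.filter (x < ·)) r (Finset.mem_filter.mpr ⟨hr, h⟩))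
        have hconst := stepApprox_gap f Lneg Lpos P hx hqP hgap
        exact ⟨f ((x + q) / 2), Tendsto.congr'
          (eventuallyEq_of_mem (Ioo_mem_nhdsGT_of_mem ⟨le_refl x, hxq⟩)
            (fun z hz => (hconst z hz).symm)) tendsto_const_nhds⟩
      · have hxge : ∀ r ∈ P, r ≤ x := fun r hr =>
          not_lt.mp (fun hc => h2 ⟨r, Finset.mem_filter.mpr ⟨hr, hc⟩⟩)
        refine ⟨Lpos, Tendsto.congr'
          (eventuallyEq_of_mem self_mem_nhdsWithin (fun z hz => ?_)) tendsto_const_nhds⟩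
        rw [Set.mem_Ioi] at hz
        exact (stepApprox_high f Lneg Lpos P hPne
          (fun r hr => le_of_lt (lt_of_le_of_lt (hxge r hr) hz))
          (fun hc => absurd (hxge z hc) (not_le.mpr hz))).symm
  · -- limit at -∞
    refine ⟨Lneg, Tendsto.congr' ?_ tendsto_const_nhds⟩
    filter_upwards [eventually_le_atBot (P.min' hPne - 1)] with z hz
    exact (stepApprox_low f Lneg Lpos P
      (fun r hr => by linarith [Finset.min'_le P r hr])
      (fun hc => by linarith [Finset.min'_le P z hc])).symm
  · -- limit at +∞
    refine ⟨Lpos, Tendsto.congr' ?_ tendsto_const_nhds⟩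
    filter_upwards [eventually_ge_atTop (P.max' hPne + 1)] with z hz
    exact (stepApprox_high f Lneg Lpos P hPne
      (fun r hr => by linarith [Finset.le_max' P r hr])
      (fun hc => by linarith [Finset.le_max' P z hc])).symm
  · -- sup bound
    intro x
    by_cases hxP : x ∈ P
    · rw [stepApprox_mem f Lneg Lpos P hxP, sub_self, norm_zero]
      positivity
    · by_cases h1 : (P.filter (· < x)).Nonempty
      · by_cases h2 : (P.filter (x < ·)).Nonempty
        · set p := (P.filter (· < x)).max' h1 with hp
          set q := (P.filter (x < ·)).min' h2 with hq
          have hpP : p ∈ P := (Finset.mem_filter.mp ((P.filter (· < x)).max'_mem h1)).1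
          have hpx : p < x := (Finset.mem_filter.mp ((P.filter (· < x)).max'_mem h1)).2
          have hqP : q ∈ P := (Finset.mem_filter.mp ((P.filter (x < ·)).min'_mem h2)).1
          have hxq : x < q := (Finset.mem_filter.mp ((P.filter (x < ·)).min'_mem h2)).2
          have hgap : ∀ r ∈ P, r ≤ p ∨ q ≤ r := by
            intro r hr
            rcases lt_trichotomy r x with h | h | h
            · exact Or.inl (Finset.le_max' (P.filter (· < x)) r (Finset.mem_filter.mpr ⟨hr, h⟩))
            · exact absurd (h ▸ hr) hxP
            · exact Or.inr (Finset.min'_le (P.filter (x < ·)) r (Finset.mem_filter.mpr ⟨hr, h⟩))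
          obtain ⟨c, hc⟩ := key p hpP q hqP (lt_trans hpx hxq) hgap
          have hmid : (p + q) / 2 ∈ Set.Ioo p q := ⟨by linarith, by linarith⟩
          rw [stepApprox_gap f Lneg Lpos P hpP hqP hgap x ⟨hpx, hxq⟩]
          calc ‖f x - f ((p + q) / 2)‖ ≤ ‖f x - c‖ + ‖c - f ((p + q) / 2)‖ := by
                have h3 := norm_add_le (f x - c) (c - f ((p + q) / 2))
                simpa using h3
            _ ≤ ε + ε := add_le_add (hc x ⟨hpx, hxq⟩)
                (by rw [norm_sub_rev]; exact hc _ hmid)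
            _ = 2 * ε := by ring
        · have hxge : ∀ r ∈ P, r ≤ x := fun r hr =>
            not_lt.mp (fun hc => h2 ⟨r, Finset.mem_filter.mpr ⟨hr, hc⟩⟩)
          rw [stepApprox_high f Lneg Lpos P hPne hxge hxP]
          linarith [hb x (hxge b hbP)]
      · have hxle : ∀ r ∈ P, x ≤ r := fun r hr =>
          not_lt.mp (fun hc => h1 ⟨r, Finset.mem_filter.mpr ⟨hr, hc⟩⟩)
        rw [stepApprox_low f Lneg Lpos P hxle hxP]
        linarith [ha x (hxle a haP)]
end

section
/- Let 1 ≤ p < ∞, let B be a bounded operator on L^p(ℝ), let I be a finite index set, and let (E_k)_{k∈I} and (F_k)_{k∈I} be two families of measurable subsets of ℝ such that the sets E_k (k ∈ I) are pairwise disjoint and the sets F_k (k ∈ I) are pairwise disjoint. Then ‖Σ_{k∈I} M_{χ_{E_k}} ∘ B ∘ M_{χ_{F_k}}‖ ≤ ‖B‖ in the operator norm on L^p(ℝ). -/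
open MeasureTheory Filter Topology
open scoped ENNReal

noncomputable section

/-- The space `L^p(ℝ)` of complex-valued `p`-integrable functions on `ℝ`. -/
abbrev LpSp (p : ℝ≥0∞) := Lp ℂ p (volume : Measure ℝ)

/-- Bounded operators on `L^p(ℝ)`. -/
abbrev OpSp (p : ℝ≥0∞) [Fact (1 ≤ p)] := LpSp p →L[ℂ] LpSp p

/-- `M` is the operator of multiplication by the function `a` on `L^p(ℝ)`. -/
def IsMulOp (p : ℝ≥0∞) [Fact (1 ≤ p)] (a : ℝ → ℂ) (M : OpSp p) : Prop :=
  ∀ u : LpSp p, (M u : ℝ → ℂ) =ᵐ[volume] fun x => a x * (u : ℝ → ℂ) x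

/-- coeFn of a finite sum in Lp. -/
lemma Lp_coeFn_sum {α E : Type*} [MeasurableSpace α] {μ : MeasureTheory.Measure α}
    [NormedAddCommGroup E] {p : ℝ≥0∞} {ι : Type*} (s : Finset ι) (f : ι → Lp E p μ) :
    (↑(∑ k ∈ s, f k) : α → E) =ᵐ[μ] fun x => ∑ k ∈ s, (f k : α → E) x := by
  classical
  induction s using Finset.induction_on with
  | empty => simp only [Finset.sum_empty]; exact Lp.coeFn_zero E p μ
  | insert _ _ hk ih =>
    rename_i a s
    rw [Finset.sum_insert hk]
    filter_upwards [Lp.coeFn_add (f a) (∑ k ∈ s, f k), ih] with x h1 h2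
    rw [h1, Finset.sum_insert hk, Pi.add_apply, h2]

lemma coe_nnnorm_Lp {α E : Type*} [MeasurableSpace α] {μ : MeasureTheory.Measure α}
    [NormedAddCommGroup E] {p : ℝ≥0∞} [Fact (1 ≤ p)] (f : Lp E p μ) :
    (‖f‖₊ : ℝ≥0∞) = eLpNorm f p μ := by
  rw [Lp.nnnorm_def, ENNReal.coe_toNNReal (Lp.eLpNorm_ne_top _)]

/-- for a bounded operator `B` on `L^p(ℝ)`, `1 ≤ p < ∞`, and finite families
`(E k)`, `(F k)` of measurable sets, each pairwise disjoint, one has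
`‖Σ_k χ_{E k} B χ_{F k}‖ ≤ ‖B‖`. -/
theorem stmt_3 (p : ℝ≥0∞) [Fact (1 ≤ p)] (hp : p ≠ ⊤)
    (B : OpSp p) (ι : Type) [Fintype ι]
    (E F : ι → Set ℝ)
    (hEm : ∀ k, MeasurableSet (E k)) (hFm : ∀ k, MeasurableSet (F k))
    (hEdis : ∀ i j, i ≠ j → Disjoint (E i) (E j))
    (hFdis : ∀ i j, i ≠ j → Disjoint (F i) (F j))
    (ME MF : ι → OpSp p)
    (hME : ∀ k, IsMulOp p (Set.indicator (E k) fun _ => (1 : ℂ)) (ME k))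
    (hMF : ∀ k, IsMulOp p (Set.indicator (F k) fun _ => (1 : ℂ)) (MF k)) :
    ‖∑ k : ι, ME k * B * MF k‖ ≤ ‖B‖ := by
  classical
  have hp1 : 1 ≤ p := Fact.out
  have hp0 : p ≠ 0 := by
    intro h; rw [h] at hp1; simp at hp1
  set q : ℝ := p.toReal with hq
  have hq0 : 0 < q := ENNReal.toReal_pos hp0 hp
  have hqne : q ≠ 0 := hq0.ne'
  apply ContinuousLinearMap.opNorm_le_bound _ (norm_nonneg B)
  intro u
  set w : ι → LpSp p := fun k => MF k u with hw
  set v : ι → LpSp p := fun k => B (w k) with hv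
  -- the left-hand side applied to u
  have happ : (∑ k : ι, ME k * B * MF k) u = ∑ k : ι, ME k (v k) := by
    rw [ContinuousLinearMap.sum_apply]
    exact Finset.sum_congr rfl fun k _ => rfl
  -- a.e. representation of the application
  have hae : (↑((∑ k : ι, ME k * B * MF k) u) : ℝ → ℂ) =ᵐ[volume]
      fun x => ∑ k : ι, Set.indicator (E k) (fun _ => (1 : ℂ)) x * (v k : ℝ → ℂ) x := by
    rw [happ]
    have h1 := Lp_coeFn_sum (Finset.univ) (fun k => ME k (v k))
    have h2 : ∀ᵐ x ∂(volume : Measure ℝ), ∀ k : ι,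
        (ME k (v k) : ℝ → ℂ) x = Set.indicator (E k) (fun _ => (1 : ℂ)) x * (v k : ℝ → ℂ) x :=
      ae_all_iff.2 fun k => hME k (v k)
    filter_upwards [h1, h2] with x h1 h2
    rw [h1]
    exact Finset.sum_congr rfl fun k _ => h2 k
  -- eLpNorm computation
  have key : eLpNorm (↑((∑ k : ι, ME k * B * MF k) u)) p volume ≤ (‖B‖₊ : ℝ≥0∞) * (‖u‖₊ : ℝ≥0∞) := by
    rw [eLpNorm_congr_ae hae, eLpNorm_eq_lintegral_rpow_enorm_toReal hp0 hp]
    -- pointwise bound on the E side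
    have hpt : ∀ x : ℝ, (‖∑ k : ι, Set.indicator (E k) (fun _ => (1:ℂ)) x * (v k : ℝ → ℂ) x‖₊ : ℝ≥0∞) ^ q
        ≤ ∑ k : ι, Set.indicator (E k) (fun y => (‖(v k : ℝ → ℂ) y‖₊ : ℝ≥0∞) ^ q) x := by
      intro x
      by_cases h : ∃ j, x ∈ E j
      · obtain ⟨j, hj⟩ := h
        have hsum : ∑ k : ι, Set.indicator (E k) (fun _ => (1:ℂ)) x * (v k : ℝ → ℂ) x
            = (v j : ℝ → ℂ) x := by
          rw [Finset.sum_eq_single j]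
          · rw [Set.indicator_of_mem hj, one_mul]
          · intro i _ hij
            have hx : x ∉ E i := fun hxi => (hEdis i j hij).ne_of_mem hxi hj rfl
            rw [Set.indicator_of_notMem hx, zero_mul]
          · intro h; exact absurd (Finset.mem_univ j) h
        rw [hsum]
        calc (‖(v j : ℝ → ℂ) x‖₊ : ℝ≥0∞) ^ q
            = Set.indicator (E j) (fun y => (‖(v j : ℝ → ℂ) y‖₊ : ℝ≥0∞) ^ q) x := by
              rw [Set.indicator_of_mem hj]
          _ ≤ _ := Finset.single_le_sum (f := fun k => Set.indicator (E k)
              (fun y => (‖(v k : ℝ → ℂ) y‖₊ : ℝ≥0∞) ^ q) x) (fun k _ => zero_le)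
              (Finset.mem_univ j)
      · push_neg at h
        have hsum : ∑ k : ι, Set.indicator (E k) (fun _ => (1:ℂ)) x * (v k : ℝ → ℂ) x = 0 := by
          apply Finset.sum_eq_zero
          intro i _
          rw [Set.indicator_of_notMem (h i), zero_mul]
        rw [hsum]
        simp [ENNReal.zero_rpow_of_pos hq0]
    -- integrate
    have hmeasv : ∀ k : ι, AEMeasurable
        (fun y => (‖(v k : ℝ → ℂ) y‖₊ : ℝ≥0∞) ^ q) volume := fun k =>
      ((Lp.aestronglyMeasurable (v k)).enorm).pow_const q
    have hint : (∫⁻ x, (‖∑ k : ι, Set.indicator (E k) (fun _ => (1:ℂ)) x * (v k : ℝ → ℂ) x‖₊ : ℝ≥0∞) ^ q ∂volume)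
        ≤ ∑ k : ι, (‖v k‖₊ : ℝ≥0∞) ^ q := by
      calc _ ≤ ∫⁻ x, ∑ k : ι, Set.indicator (E k)
              (fun y => (‖(v k : ℝ → ℂ) y‖₊ : ℝ≥0∞) ^ q) x ∂volume := lintegral_mono hpt
        _ = ∑ k : ι, ∫⁻ x, Set.indicator (E k)
              (fun y => (‖(v k : ℝ → ℂ) y‖₊ : ℝ≥0∞) ^ q) x ∂volume :=
            lintegral_finset_sum' _ (fun k _ => (hmeasv k).indicator (hEm k))
        _ ≤ ∑ k : ι, ∫⁻ x, (‖(v k : ℝ → ℂ) x‖₊ : ℝ≥0∞) ^ q ∂volume :=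
            Finset.sum_le_sum fun k _ => lintegral_mono fun x =>
              Set.indicator_le_self _ _ x
        _ = ∑ k : ι, (‖v k‖₊ : ℝ≥0∞) ^ q := by
            refine Finset.sum_congr rfl fun k _ => ?_
            rw [coe_nnnorm_Lp, eLpNorm_eq_lintegral_rpow_enorm_toReal hp0 hp]
            rw [← ENNReal.rpow_mul, one_div_mul_cancel hqne, ENNReal.rpow_one]
            rfl
    -- the F side
    have hwk : ∀ k : ι, (‖w k‖₊ : ℝ≥0∞) ^ q
        = ∫⁻ x in F k, (‖(u : ℝ → ℂ) x‖₊ : ℝ≥0∞) ^ q ∂volume := by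
      intro k
      rw [coe_nnnorm_Lp, eLpNorm_eq_lintegral_rpow_enorm_toReal hp0 hp,
        ← ENNReal.rpow_mul, one_div_mul_cancel hqne, ENNReal.rpow_one,
        ← lintegral_indicator (hFm k)]
      have : ∀ᵐ x ∂(volume : Measure ℝ),
          (‖(w k : ℝ → ℂ) x‖₊ : ℝ≥0∞) ^ q
          = Set.indicator (F k) (fun y => (‖(u : ℝ → ℂ) y‖₊ : ℝ≥0∞) ^ q) x := by
        filter_upwards [hMF k u] with x hx
        rw [hx]
        by_cases hxF : x ∈ F k
        · rw [Set.indicator_of_mem hxF, Set.indicator_of_mem hxF, one_mul]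
        · rw [Set.indicator_of_notMem hxF, Set.indicator_of_notMem hxF, zero_mul]
          simp [ENNReal.zero_rpow_of_pos hq0]
      exact lintegral_congr_ae this
    have hFsum : ∑ k : ι, (‖w k‖₊ : ℝ≥0∞) ^ q ≤ (‖u‖₊ : ℝ≥0∞) ^ q := by
      calc ∑ k : ι, (‖w k‖₊ : ℝ≥0∞) ^ q
          = ∑ k : ι, ∫⁻ x in F k, (‖(u : ℝ → ℂ) x‖₊ : ℝ≥0∞) ^ q ∂volume := by
            exact Finset.sum_congr rfl fun k _ => hwk k
        _ = ∫⁻ x in ⋃ k ∈ Finset.univ, F k, (‖(u : ℝ → ℂ) x‖₊ : ℝ≥0∞) ^ q ∂volume := by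
            refine (lintegral_biUnion_finset ?_ (fun k _ => hFm k) _).symm
            intro i _ j _ hij
            exact hFdis i j hij
        _ ≤ ∫⁻ x, (‖(u : ℝ → ℂ) x‖₊ : ℝ≥0∞) ^ q ∂volume := setLIntegral_le_lintegral _ _
        _ = (‖u‖₊ : ℝ≥0∞) ^ q := by
            rw [coe_nnnorm_Lp, eLpNorm_eq_lintegral_rpow_enorm_toReal hp0 hp,
              ← ENNReal.rpow_mul, one_div_mul_cancel hqne, ENNReal.rpow_one]
            rfl
    -- operator norm bound on v
    have hvk : ∀ k : ι, (‖v k‖₊ : ℝ≥0∞) ^ q ≤ (‖B‖₊ : ℝ≥0∞) ^ q * (‖w k‖₊ : ℝ≥0∞) ^ q := by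
      intro k
      rw [← ENNReal.mul_rpow_of_nonneg _ _ hq0.le]
      apply ENNReal.rpow_le_rpow _ hq0.le
      rw [← ENNReal.coe_mul]
      exact_mod_cast B.le_opNNNorm (w k)
    calc (∫⁻ x, (‖∑ k : ι, Set.indicator (E k) (fun _ => (1:ℂ)) x * (v k : ℝ → ℂ) x‖₊ : ℝ≥0∞) ^ q ∂volume) ^ (1/q)
        ≤ (∑ k : ι, (‖v k‖₊ : ℝ≥0∞) ^ q) ^ (1/q) :=
          ENNReal.rpow_le_rpow hint (by positivity)
      _ ≤ ((‖B‖₊ : ℝ≥0∞) ^ q * (‖u‖₊ : ℝ≥0∞) ^ q) ^ (1/q) := by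
          apply ENNReal.rpow_le_rpow _ (by positivity)
          calc ∑ k : ι, (‖v k‖₊ : ℝ≥0∞) ^ q
              ≤ ∑ k : ι, (‖B‖₊ : ℝ≥0∞) ^ q * (‖w k‖₊ : ℝ≥0∞) ^ q :=
                Finset.sum_le_sum fun k _ => hvk k
            _ = (‖B‖₊ : ℝ≥0∞) ^ q * ∑ k : ι, (‖w k‖₊ : ℝ≥0∞) ^ q := by
                rw [Finset.mul_sum]
            _ ≤ (‖B‖₊ : ℝ≥0∞) ^ q * (‖u‖₊ : ℝ≥0∞) ^ q :=
                mul_le_mul_right hFsum _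
      _ = (‖B‖₊ : ℝ≥0∞) * (‖u‖₊ : ℝ≥0∞) := by
          rw [← ENNReal.mul_rpow_of_nonneg _ _ hq0.le, ← ENNReal.rpow_mul,
            mul_one_div_cancel hqne, ENNReal.rpow_one]
  -- conclude
  rw [Lp.norm_def]
  have hne : (‖B‖₊ : ℝ≥0∞) * (‖u‖₊ : ℝ≥0∞) ≠ ⊤ := by
    exact ENNReal.mul_ne_top ENNReal.coe_ne_top ENNReal.coe_ne_top
  calc (eLpNorm (↑((∑ k : ι, ME k * B * MF k) u)) p volume).toReal
      ≤ ((‖B‖₊ : ℝ≥0∞) * (‖u‖₊ : ℝ≥0∞)).toReal := ENNReal.toReal_mono hne key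
    _ = ‖B‖ * ‖u‖ := by
        rw [ENNReal.toReal_mul, ENNReal.coe_toReal, ENNReal.coe_toReal,
          coe_nnnorm, coe_nnnorm]
end
end

section
/- Let 1 < p < ∞, let q = p/(p−1) be the conjugate exponent, let u ∈ L^p(ℝ), and let m, n be real numbers with 0 < m < n. Then ∫_{−m}^{m} ( |∫_{−∞}^{−n} u(y)/(y−x) dy|^p + |∫_{n}^{∞} u(y)/(y−x) dy|^p ) dx ≤ 2 · (q−1)^{−p/q} · ln((n+m)/(n−m)) · ‖u‖_p^p. -/
open MeasureTheory Filter Topology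
open scoped ENNReal

noncomputable section

open Set

private lemma rpow_int_aux {q x c : ℝ} (hq : 1 < q) (hx : x < c) :
    IntegrableOn (fun y : ℝ => (y - x) ^ (-q)) (Set.Ioi c) volume ∧
    (∫ y in Set.Ioi c, (y - x) ^ (-q)) = (c - x) ^ (1 - q) / (q - 1) := by
  have hmp : MeasurePreserving (fun y : ℝ => y + x) volume volume :=
    measurePreserving_add_right volume x
  have hemb : MeasurableEmbedding (fun y : ℝ => y + x) :=
    (MeasurableEquiv.addRight x).measurableEmbedding
  have hpre : (fun y : ℝ => y + x) ⁻¹' Set.Ioi c = Set.Ioi (c - x) := by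
    ext y; simp [Set.mem_preimage, sub_lt_iff_lt_add]
  have hcx : 0 < c - x := sub_pos.mpr hx
  have hq' : -q < -1 := by linarith
  constructor
  · have h := (hmp.integrableOn_comp_preimage hemb
      (f := fun y : ℝ => (y - x) ^ (-q)) (s := Set.Ioi c)).mp
    rw [hpre] at h
    apply h
    apply (integrableOn_Ioi_rpow_of_lt hq' hcx).congr_fun _ measurableSet_Ioi
    intro y hy; simp
  · have h := hmp.setIntegral_preimage_emb hemb (fun y : ℝ => (y - x) ^ (-q)) (Set.Ioi c)
    rw [hpre] at h
    rw [← h]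
    have heq : ∀ y ∈ Set.Ioi (c - x), ((y + x) - x) ^ (-q) = y ^ (-q) := fun y _ => by ring_nf
    rw [setIntegral_congr_fun measurableSet_Ioi heq, integral_Ioi_rpow_of_lt hq' hcx]
    have hq1 : (1:ℝ) - q ≠ 0 := by linarith
    have hq2 : q - 1 ≠ 0 := by linarith
    rw [show -q + 1 = 1 - q by ring]
    field_simp
    ring

private lemma key_bound {p q : ℝ} (hp : 1 < p) (hq : q = p / (p - 1))
    {v : ℝ → ℂ} (hv : MemLp v (ENNReal.ofReal p) volume)
    {x c : ℝ} (hx : x < c) :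
    ‖∫ y in Set.Ioi c, v y / ((y : ℂ) - (x : ℂ))‖ ^ p ≤
      (q - 1) ^ (-(p / q)) * (c - x)⁻¹ * ∫ y, ‖v y‖ ^ p := by
  have hp0 : (0:ℝ) < p - 1 := by linarith
  have hpq : p.HolderConjugate q := (Real.holderConjugate_iff_eq_conjExponent hp).mpr hq
  have hq1 : 1 < q := hpq.symm.lt
  have hq0 : (0:ℝ) < q - 1 := by linarith
  have hcx : 0 < c - x := sub_pos.mpr hx
  obtain ⟨hint, hval⟩ := rpow_int_aux hq1 hx
  set μ := volume.restrict (Set.Ioi c) with hμ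
  set I := ∫ y, ‖v y‖ ^ p with hI
  have hI0 : 0 ≤ I := integral_nonneg fun y => Real.rpow_nonneg (norm_nonneg _) p
  set B := (c - x) ^ (1 - q) / (q - 1) with hB
  have hB0 : 0 ≤ B := div_nonneg (Real.rpow_nonneg hcx.le _) hq0.le
  have hgeq : ∀ y ∈ Set.Ioi c, (y - x) ^ (-q) = ((y - x)⁻¹) ^ q := by
    intro y hy
    have hyx : 0 < y - x := by simp only [Set.mem_Ioi] at hy; linarith
    rw [Real.rpow_neg hyx.le, ← Real.inv_rpow hyx.le]
  -- MemLp of the kernel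
  have hgmem : MemLp (fun y : ℝ => (y - x)⁻¹) (ENNReal.ofReal q) μ := by
    have hmeas : AEStronglyMeasurable (fun y : ℝ => (y - x)⁻¹) μ :=
      ((measurable_id.sub_const x).inv).aestronglyMeasurable
    have hq0' : ENNReal.ofReal q ≠ 0 := by
      simp only [ne_eq, ENNReal.ofReal_eq_zero, not_le]; linarith
    have hqt : ENNReal.ofReal q ≠ ∞ := ENNReal.ofReal_ne_top
    rw [← memLp_norm_rpow_iff hmeas hq0' hqt, ENNReal.div_self hq0' hqt,
      memLp_one_iff_integrable]
    have : Integrable (fun y : ℝ => ((y - x)⁻¹) ^ q) μ := by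
      apply hint.congr_fun hgeq measurableSet_Ioi
    apply this.congr
    filter_upwards [ae_restrict_mem measurableSet_Ioi] with y hy
    have hyx : 0 < y - x := by simp only [Set.mem_Ioi] at hy; linarith
    rw [ENNReal.toReal_ofReal (by linarith : (0:ℝ) ≤ q), Real.norm_eq_abs,
      abs_of_pos (inv_pos.mpr hyx)]
  have hfmem : MemLp (fun y : ℝ => ‖v y‖) (ENNReal.ofReal p) μ := (hv.restrict _).norm
  have hH := integral_mul_le_Lp_mul_Lq_of_nonneg (μ := μ) hpq
    (f := fun y : ℝ => ‖v y‖) (g := fun y : ℝ => (y - x)⁻¹)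
    (ae_of_all _ fun y => norm_nonneg _)
    (by filter_upwards [ae_restrict_mem measurableSet_Ioi] with y hy
        have hyx : 0 < y - x := by simp only [Set.mem_Ioi] at hy; linarith
        positivity)
    hfmem hgmem
  have hBval : ∫ y, ((y - x)⁻¹) ^ q ∂μ = B := by
    rw [hμ, ← setIntegral_congr_fun measurableSet_Ioi hgeq, hval]
  have hIntGlob : Integrable (fun y => ‖v y‖ ^ p) volume := by
    have h := hv.integrable_norm_rpow (by
      simp only [ne_eq, ENNReal.ofReal_eq_zero, not_le]; linarith) ENNReal.ofReal_ne_top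
    rwa [ENNReal.toReal_ofReal (by linarith : (0:ℝ) ≤ p)] at h
  have hA : ∫ y, ‖v y‖ ^ p ∂μ ≤ I :=
    setIntegral_le_integral hIntGlob (ae_of_all _ fun y => Real.rpow_nonneg (norm_nonneg _) p)
  have hA0 : 0 ≤ ∫ y, ‖v y‖ ^ p ∂μ :=
    integral_nonneg fun y => Real.rpow_nonneg (norm_nonneg _) p
  have step1 : ‖∫ y in Set.Ioi c, v y / ((y : ℂ) - (x : ℂ))‖ ≤ I ^ (1/p) * B ^ (1/q) := by
    calc ‖∫ y in Set.Ioi c, v y / ((y : ℂ) - (x : ℂ))‖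
        ≤ ∫ y in Set.Ioi c, ‖v y / ((y : ℂ) - (x : ℂ))‖ := norm_integral_le_integral_norm _
      _ = ∫ y, ‖v y‖ * (y - x)⁻¹ ∂μ := by
          apply setIntegral_congr_fun measurableSet_Ioi
          intro y hy
          have hyx : 0 < y - x := by simp only [Set.mem_Ioi] at hy; linarith
          have h1 : ((y:ℂ) - (x:ℂ)) = ((y - x : ℝ) : ℂ) := by push_cast; ring
          show ‖v y / ((y:ℂ) - (x:ℂ))‖ = ‖v y‖ * (y - x)⁻¹
          rw [norm_div, h1, Complex.norm_real, Real.norm_eq_abs, abs_of_pos hyx,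
            div_eq_mul_inv]
      _ ≤ (∫ y, ‖v y‖ ^ p ∂μ) ^ (1/p) * (∫ y, ((y - x)⁻¹) ^ q ∂μ) ^ (1/q) := hH
      _ ≤ I ^ (1/p) * B ^ (1/q) := by
          rw [hBval]
          exact mul_le_mul_of_nonneg_right
            (Real.rpow_le_rpow hA0 hA (by positivity)) (Real.rpow_nonneg hB0 _)
  have harith : (1 - q) * (p / q) = -1 := by
    rw [hq]; field_simp; ring
  calc ‖∫ y in Set.Ioi c, v y / ((y : ℂ) - (x : ℂ))‖ ^ p
      ≤ (I ^ (1/p) * B ^ (1/q)) ^ p :=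
        Real.rpow_le_rpow (norm_nonneg _) step1 (by linarith)
    _ = I * B ^ (p / q) := by
        rw [Real.mul_rpow (Real.rpow_nonneg hI0 _) (Real.rpow_nonneg hB0 _),
          ← Real.rpow_mul hI0, ← Real.rpow_mul hB0, one_div_mul_cancel (by linarith : p ≠ 0),
          Real.rpow_one, one_div, inv_mul_eq_div]
    _ = (q - 1) ^ (-(p / q)) * (c - x)⁻¹ * I := by
        rw [hB, Real.div_rpow (Real.rpow_nonneg hcx.le _) hq0.le,
          ← Real.rpow_mul hcx.le, harith, Real.rpow_neg_one,
          div_eq_mul_inv, ← Real.rpow_neg hq0.le]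
        ring


/-- for `1 < p < ∞`, `q = p/(p-1)`, `u ∈ L^p(ℝ)` and `0 < m < n`,
`∫_{-m}^m ( |∫_{-∞}^{-n} u(y)/(y-x) dy|^p + |∫_n^∞ u(y)/(y-x) dy|^p ) dx
  ≤ 2 (q-1)^{-p/q} ln((n+m)/(n-m)) ‖u‖_p^p`. -/
theorem stmt_5 (p : ℝ) (hp : 1 < p) [Fact (1 ≤ ENNReal.ofReal p)]
    (q : ℝ) (hq : q = p / (p - 1))
    (u : Lp ℂ (ENNReal.ofReal p) (volume : Measure ℝ))
    (m n : ℝ) (hm : 0 < m) (hmn : m < n) :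
    (∫ x in Set.Icc (-m) m,
        (‖∫ y in Set.Iic (-n), (u : ℝ → ℂ) y / ((y : ℂ) - (x : ℂ))‖ ^ p +
         ‖∫ y in Set.Ici n, (u : ℝ → ℂ) y / ((y : ℂ) - (x : ℂ))‖ ^ p)) ≤
      2 * (q - 1) ^ (-(p / q)) * Real.log ((n + m) / (n - m)) * ‖u‖ ^ p := by

  have hp0 : (0:ℝ) < p := by linarith
  set I := ∫ y, ‖(u : ℝ → ℂ) y‖ ^ p with hI
  have hI0 : 0 ≤ I := integral_nonneg fun y => Real.rpow_nonneg (norm_nonneg _) p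
  -- ‖u‖ ^ p = I
  have hnormu : ‖u‖ ^ p = I := by
    have h1 := (Lp.memLp u).eLpNorm_eq_integral_rpow_norm
      (by simp only [ne_eq, ENNReal.ofReal_eq_zero, not_le]; linarith) ENNReal.ofReal_ne_top
    rw [ENNReal.toReal_ofReal hp0.le] at h1
    rw [Lp.norm_def, h1, ENNReal.toReal_ofReal (Real.rpow_nonneg hI0 _),
      ← Real.rpow_mul hI0, inv_mul_cancel₀ (ne_of_gt hp0), Real.rpow_one]
  -- MemLp for reflected function
  have hvmem : MemLp (fun z : ℝ => (u : ℝ → ℂ) (-z)) (ENNReal.ofReal p) volume :=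
    (Lp.memLp u).comp_measurePreserving (Measure.measurePreserving_neg volume)
  have hIneg : (∫ y, ‖(u : ℝ → ℂ) (-y)‖ ^ p) = I := by
    have h := (Measure.measurePreserving_neg (volume : Measure ℝ)).integral_comp
      (MeasurableEquiv.neg ℝ).measurableEmbedding (fun y : ℝ => ‖(u : ℝ → ℂ) y‖ ^ p)
    simpa using h
  -- pointwise bound
  have hbound : ∀ x ∈ Set.Icc (-m) m,
      ‖∫ y in Set.Iic (-n), (u : ℝ → ℂ) y / ((y : ℂ) - (x : ℂ))‖ ^ p +
      ‖∫ y in Set.Ici n, (u : ℝ → ℂ) y / ((y : ℂ) - (x : ℂ))‖ ^ p ≤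
      (q - 1) ^ (-(p / q)) * I * ((n + x)⁻¹ + (n - x)⁻¹) := by
    intro x hx
    obtain ⟨hx1, hx2⟩ := hx
    have hR : ‖∫ y in Set.Ici n, (u : ℝ → ℂ) y / ((y : ℂ) - (x : ℂ))‖ ^ p ≤
        (q - 1) ^ (-(p / q)) * (n - x)⁻¹ * I := by
      rw [integral_Ici_eq_integral_Ioi]
      exact key_bound hp hq (Lp.memLp u) (by linarith)
    have hLnorm : ‖∫ y in Set.Iic (-n), (u : ℝ → ℂ) y / ((y : ℂ) - (x : ℂ))‖ =
        ‖∫ y in Set.Ioi n, (fun z : ℝ => (u : ℝ → ℂ) (-z)) y / ((y : ℂ) - ((-x : ℝ) : ℂ))‖ := by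
      rw [← integral_comp_neg_Ioi n (fun y : ℝ => (u : ℝ → ℂ) y / ((y : ℂ) - (x : ℂ)))]
      have hcg : ∀ y ∈ Set.Ioi n,
          (u : ℝ → ℂ) (-y) / (((-y : ℝ) : ℂ) - (x : ℂ)) =
          -((fun z : ℝ => (u : ℝ → ℂ) (-z)) y / ((y : ℂ) - ((-x : ℝ) : ℂ))) := by
        intro y hy
        have h2 : (((-y : ℝ)) : ℂ) - (x : ℂ) = -((y : ℂ) - ((-x : ℝ) : ℂ)) := by
          push_cast; ring
        rw [h2, div_neg]
      rw [setIntegral_congr_fun measurableSet_Ioi hcg, integral_neg, norm_neg]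
    have hL : ‖∫ y in Set.Iic (-n), (u : ℝ → ℂ) y / ((y : ℂ) - (x : ℂ))‖ ^ p ≤
        (q - 1) ^ (-(p / q)) * (n + x)⁻¹ * I := by
      rw [hLnorm]
      have h := key_bound hp hq hvmem (show -x < n by linarith)
      rw [hIneg, sub_neg_eq_add] at h
      exact h
    calc _ ≤ ((q - 1) ^ (-(p / q)) * (n + x)⁻¹ * I) +
          ((q - 1) ^ (-(p / q)) * (n - x)⁻¹ * I) := add_le_add hL hR
      _ = (q - 1) ^ (-(p / q)) * I * ((n + x)⁻¹ + (n - x)⁻¹) := by ring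
  -- integrability of the majorant
  have hsub : Set.uIcc (-m) m = Set.Icc (-m) m := Set.uIcc_of_le (by linarith)
  have hc1 : ContinuousOn (fun x : ℝ => (n + x)⁻¹) (Set.Icc (-m) m) := by
    apply ContinuousOn.inv₀ (by fun_prop)
    intro x hx; exact ne_of_gt (by linarith [hx.1])
  have hc2 : ContinuousOn (fun x : ℝ => (n - x)⁻¹) (Set.Icc (-m) m) := by
    apply ContinuousOn.inv₀ (by fun_prop)
    intro x hx; exact ne_of_gt (by linarith [hx.2])
  have hcont : ContinuousOn
      (fun x : ℝ => (q - 1) ^ (-(p / q)) * I * ((n + x)⁻¹ + (n - x)⁻¹)) (Set.Icc (-m) m) :=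
    continuousOn_const.mul (hc1.add hc2)
  have hgi : IntegrableOn
      (fun x : ℝ => (q - 1) ^ (-(p / q)) * I * ((n + x)⁻¹ + (n - x)⁻¹))
      (Set.Icc (-m) m) volume := hcont.integrableOn_compact isCompact_Icc
  -- main estimate
  have hmain : (∫ x in Set.Icc (-m) m,
        (‖∫ y in Set.Iic (-n), (u : ℝ → ℂ) y / ((y : ℂ) - (x : ℂ))‖ ^ p +
         ‖∫ y in Set.Ici n, (u : ℝ → ℂ) y / ((y : ℂ) - (x : ℂ))‖ ^ p)) ≤
      ∫ x in Set.Icc (-m) m,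
        (q - 1) ^ (-(p / q)) * I * ((n + x)⁻¹ + (n - x)⁻¹) := by
    apply integral_mono_of_nonneg
    · exact ae_of_all _ fun x => add_nonneg (Real.rpow_nonneg (norm_nonneg _) p)
        (Real.rpow_nonneg (norm_nonneg _) p)
    · exact hgi
    · filter_upwards [ae_restrict_mem measurableSet_Icc] with x hx
      exact hbound x hx
  -- compute the majorant integral
  have e1 : (∫ x in (-m)..m, (n + x)⁻¹) = Real.log ((n + m) / (n - m)) := by
    rw [intervalIntegral.integral_comp_add_left (fun t : ℝ => t⁻¹) n,
      integral_inv (by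
        rw [Set.uIcc_of_le (by linarith)]
        simp only [Set.mem_Icc, not_and, not_le]
        intro h; linarith),
      show n + -m = n - m by ring]
  have e2 : (∫ x in (-m)..m, (n - x)⁻¹) = Real.log ((n + m) / (n - m)) := by
    rw [intervalIntegral.integral_comp_sub_left (fun t : ℝ => t⁻¹) n,
      integral_inv (by
        rw [Set.uIcc_of_le (by linarith)]
        simp only [Set.mem_Icc, not_and, not_le]
        intro h; linarith),
      show n - -m = n + m by ring]
  have hint1 : IntervalIntegrable (fun x : ℝ => (n + x)⁻¹) volume (-m) m := by
    apply ContinuousOn.intervalIntegrable; rw [hsub]; exact hc1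
  have hint2 : IntervalIntegrable (fun x : ℝ => (n - x)⁻¹) volume (-m) m := by
    apply ContinuousOn.intervalIntegrable; rw [hsub]; exact hc2
  have hIcc : (∫ x in Set.Icc (-m) m, ((n + x)⁻¹ + (n - x)⁻¹)) =
      2 * Real.log ((n + m) / (n - m)) := by
    rw [integral_Icc_eq_integral_Ioc,
      ← intervalIntegral.integral_of_le (by linarith : -m ≤ m),
      intervalIntegral.integral_add hint1 hint2, e1, e2]
    ring
  calc _ ≤ ∫ x in Set.Icc (-m) m,
        (q - 1) ^ (-(p / q)) * I * ((n + x)⁻¹ + (n - x)⁻¹) := hmain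
    _ = (q - 1) ^ (-(p / q)) * I * (2 * Real.log ((n + m) / (n - m))) := by
        rw [integral_const_mul, hIcc]
    _ = 2 * (q - 1) ^ (-(p / q)) * Real.log ((n + m) / (n - m)) * ‖u‖ ^ p := by
        rw [hnormu]; ring
end
end

section
/- Let 1 < p < ∞ and let S be a bounded operator on L^p(ℝ) with the following property: for every u ∈ L^p(ℝ) and every open set V ⊆ ℝ on which u vanishes almost everywhere, one has (S u)(x) = (1/(π i)) ∫_ℝ u(y)/(y − x) dy for almost every x ∈ V. Then for every m ∈ ℕ, ‖P_m ∘ S ∘ Q_n‖ → 0 and ‖Q_n ∘ S ∘ P_m‖ → 0 as n → ∞, in the operator norm on L^p(ℝ). (In particular, the Cauchy singular integral operator S belongs to the algebra L(L^p(ℝ), P).) -/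
open MeasureTheory Filter Topology
open scoped ENNReal

noncomputable section

section Aux
open Set

private def Dfun (m : ℕ) (r' : ℝ) : ℝ → ℝ≥0∞ := fun x => (‖(|x| - (m:ℝ))⁻¹‖₊ : ℝ≥0∞) ^ r'

private lemma Dfun_meas (m : ℕ) (r' : ℝ) : Measurable (Dfun m r') := by
  apply Measurable.pow_const
  exact ((measurable_abs.sub measurable_const).inv.nnnorm).coe_nnreal_ennreal

private lemma step1 {r' : ℝ} (hr' : 1 < r') :
    ∫⁻ x in Ioi (1:ℝ), ENNReal.ofReal (x ^ (-r')) ∂volume < ⊤ := by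
  have h := (integrableOn_Ioi_rpow_of_lt (show -r' < -1 by linarith) one_pos).2
  refine lt_of_le_of_lt ?_ h
  refine lintegral_mono fun x => ?_
  rw [Real.enorm_eq_ofReal_abs]
  exact ENNReal.ofReal_le_ofReal (le_abs_self _)

private lemma step2 {r' : ℝ} (m : ℕ) :
    ∫⁻ x in Ioi ((m:ℝ)+1), ENNReal.ofReal ((x - m) ^ (-r')) ∂volume
      = ∫⁻ x in Ioi (1:ℝ), ENNReal.ofReal (x ^ (-r')) ∂volume := by
  have hmeas : Measurable fun t : ℝ => ENNReal.ofReal (t ^ (-r')) := by fun_prop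
  have hind : Measurable ((Ioi (1:ℝ)).indicator fun t => ENNReal.ofReal (t ^ (-r'))) :=
    hmeas.indicator measurableSet_Ioi
  rw [← lintegral_indicator measurableSet_Ioi, ← lintegral_indicator measurableSet_Ioi]
  have key : ∀ x : ℝ, (Ioi ((m:ℝ)+1)).indicator (fun x => ENNReal.ofReal ((x - m) ^ (-r'))) x
      = ((Ioi (1:ℝ)).indicator fun t => ENNReal.ofReal (t ^ (-r'))) (x + -(m:ℝ)) := by
    intro x
    by_cases hx : x ∈ Ioi ((m:ℝ)+1)
    · rw [indicator_of_mem hx, indicator_of_mem (by simp at hx ⊢; linarith)]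
      ring_nf
    · rw [indicator_of_notMem hx, indicator_of_notMem (by simp at hx ⊢; linarith)]
  simp_rw [key]
  exact (measurePreserving_add_right volume (-(m:ℝ))).lintegral_comp hind

private lemma step3 {r' : ℝ} (hr' : 1 < r') (m : ℕ) :
    ∫⁻ x in Ioi ((m:ℝ)+1), Dfun m r' x ∂volume < ⊤ := by
  have heq : ∫⁻ x in Ioi ((m:ℝ)+1), Dfun m r' x ∂volume
      = ∫⁻ x in Ioi ((m:ℝ)+1), ENNReal.ofReal ((x - m) ^ (-r')) ∂volume := by
    refine setLIntegral_congr_fun measurableSet_Ioi (fun x hx => ?_)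
    have hx1 : (m:ℝ) + 1 < x := hx
    have hxm : (0:ℝ) < x - m := by linarith
    have hm0 : (0:ℝ) ≤ m := Nat.cast_nonneg m
    have habs : |x| = x := abs_of_pos (by linarith)
    rw [Dfun, habs, ← enorm_eq_nnnorm, Real.enorm_eq_ofReal (by positivity),
      ENNReal.ofReal_rpow_of_nonneg (by positivity) (by linarith),
      Real.inv_rpow hxm.le, ← Real.rpow_neg hxm.le]
  rw [heq, step2]
  exact step1 hr'

private lemma step4 {r' : ℝ} (hr' : 1 < r') (m : ℕ) :
    ∫⁻ x in Iio (-((m:ℝ)+1)), Dfun m r' x ∂volume < ⊤ := by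
  have hind : Measurable ((Ioi ((m:ℝ)+1)).indicator (Dfun m r')) :=
    (Dfun_meas m r').indicator measurableSet_Ioi
  have heq : ∫⁻ x in Iio (-((m:ℝ)+1)), Dfun m r' x ∂volume
      = ∫⁻ x in Ioi ((m:ℝ)+1), Dfun m r' x ∂volume := by
    rw [← lintegral_indicator measurableSet_Iio, ← lintegral_indicator measurableSet_Ioi]
    have key : ∀ x : ℝ, (Iio (-((m:ℝ)+1))).indicator (Dfun m r') x
        = ((Ioi ((m:ℝ)+1)).indicator (Dfun m r')) (-x) := by
      intro x
      by_cases hx : x ∈ Iio (-((m:ℝ)+1))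
      · rw [indicator_of_mem hx, indicator_of_mem (by simp at hx ⊢; linarith)]
        simp [Dfun, abs_neg]
      · rw [indicator_of_notMem hx, indicator_of_notMem (by simp at hx ⊢; linarith)]
    simp_rw [key]
    exact (Measure.measurePreserving_neg volume).lintegral_comp hind
  rw [heq]
  exact step3 hr' m

private lemma tail_tendsto (r : ℝ≥0∞) (hr1 : 1 < r) (hr2 : r ≠ ⊤) (m : ℕ) :
    Tendsto (fun n : ℕ => eLpNorm (((Icc (-(n:ℝ)) (n:ℝ))ᶜ).indicator
      (fun x => (|x| - (m:ℝ))⁻¹)) r volume) atTop (𝓝 0) := by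
  have hr0 : r ≠ 0 := (zero_lt_one.trans hr1).ne'
  set r' : ℝ := r.toReal with hr'def
  have hr'1 : 1 < r' := by
    rw [hr'def, ← ENNReal.toReal_one]
    exact (ENNReal.toReal_lt_toReal (by simp) hr2).mpr hr1
  have hr'0 : 0 < r' := by linarith
  set A : ℕ → Set ℝ := fun n => (Icc (-(n:ℝ)) (n:ℝ))ᶜ with hA
  have hAmeas : ∀ n, MeasurableSet (A n) := fun n => measurableSet_Icc.compl
  set μ' : Measure ℝ := volume.withDensity (Dfun m r') with hμ'
  have hν : ∀ n, μ' (A n) = ∫⁻ x in A n, Dfun m r' x ∂volume := fun n =>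
    withDensity_apply _ (hAmeas n)
  have heq : ∀ n : ℕ, eLpNorm ((A n).indicator (fun x => (|x| - (m:ℝ))⁻¹)) r volume
      = (μ' (A n)) ^ (1/r') := by
    intro n
    rw [eLpNorm_indicator_eq_eLpNorm_restrict (hAmeas n),
      eLpNorm_eq_lintegral_rpow_enorm_toReal hr0 hr2, hν]
    rfl
  have hfin : μ' (A (m+1)) ≠ ⊤ := by
    have hsub : A (m+1) ⊆ Iio (-((m:ℝ)+1)) ∪ Ioi ((m:ℝ)+1) := by
      intro x hx
      rw [hA] at hx
      simp only [mem_compl_iff, mem_Icc, not_and_or, not_le] at hx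
      push_cast at hx
      simp only [mem_union, mem_Iio, mem_Ioi]
      tauto
    rw [hν]
    refine ne_of_lt (lt_of_le_of_lt (lintegral_mono_set hsub) ?_)
    calc ∫⁻ x in Iio (-((m:ℝ)+1)) ∪ Ioi ((m:ℝ)+1), Dfun m r' x ∂volume
        ≤ (∫⁻ x in Iio (-((m:ℝ)+1)), Dfun m r' x ∂volume)
          + ∫⁻ x in Ioi ((m:ℝ)+1), Dfun m r' x ∂volume := lintegral_union_le _ _ _
      _ < ⊤ := ENNReal.add_lt_top.mpr ⟨step4 hr'1 m, step3 hr'1 m⟩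
  have hanti : Antitone A := by
    intro a b hab
    apply compl_subset_compl.mpr
    exact Icc_subset_Icc (by simp [neg_le_neg, Nat.cast_le.mpr hab]) (Nat.cast_le.mpr hab)
  have hiInter : ⋂ n, A n = ∅ := by
    rw [eq_empty_iff_forall_notMem]
    intro x hx
    obtain ⟨n, hn⟩ := exists_nat_ge |x|
    exact (Set.mem_iInter.mp hx n) (abs_le.mp hn)
  have hten : Tendsto (fun n => μ' (A n)) atTop (𝓝 0) := by
    have := tendsto_measure_iInter_atTop (μ := μ')
      (fun n => (hAmeas n).nullMeasurableSet) hanti ⟨m+1, hfin⟩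
    rwa [hiInter, measure_empty] at this
  refine (tendsto_congr heq).mpr ?_
  rw [ENNReal.tendsto_nhds_zero]
  intro ε hε
  by_cases hεtop : ε = ⊤
  · exact Eventually.of_forall fun n => hεtop ▸ le_top
  have hεr : 0 < ε ^ r' := ENNReal.rpow_pos hε hεtop
  filter_upwards [ENNReal.tendsto_nhds_zero.mp hten (ε ^ r') hεr] with n hn
  calc (μ' (A n)) ^ (1/r') ≤ (ε ^ r') ^ (1/r') := ENNReal.rpow_le_rpow hn (by positivity)
    _ = ε := by rw [← ENNReal.rpow_mul, mul_one_div, div_self hr'0.ne', ENNReal.rpow_one]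

section helpers
variable (p : ℝ≥0∞) [Fact (1 ≤ p)]

private lemma coeQ (P : ℕ → OpSp p)
    (hP : ∀ n : ℕ, IsMulOp p (Set.indicator (Set.Icc (-(n : ℝ)) (n : ℝ)) fun _ => (1 : ℂ)) (P n))
    (n : ℕ) (u : LpSp p) :
    ((1 - P n) u : ℝ → ℂ) =ᵐ[volume]
      fun x => ((Icc (-(n:ℝ)) (n:ℝ))ᶜ).indicator (fun _ => (1:ℂ)) x * (u : ℝ → ℂ) x := by
  have h1 : (1 - P n) u = u - P n u := by
    simp [ContinuousLinearMap.sub_apply]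
  rw [h1]
  filter_upwards [Lp.coeFn_sub (f := u) (g := P n u), hP n u] with x h2 h3
  rw [h2, Pi.sub_apply, h3]
  by_cases hx : x ∈ Icc (-(n:ℝ)) (n:ℝ)
  · rw [indicator_of_mem hx, indicator_of_notMem (by simpa using hx)]
    ring
  · rw [indicator_of_notMem hx, indicator_of_mem (mem_compl hx)]
    ring

omit [Fact (1 ≤ p)] in
private lemma eLpNorm_indmul_le (s : Set ℝ) (f : ℝ → ℂ) :
    eLpNorm (fun x => s.indicator (fun _ => (1:ℂ)) x * f x) p volume
      ≤ eLpNorm f p volume := by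
  refine eLpNorm_mono_ae (Eventually.of_forall fun x => ?_)
  rw [norm_mul]
  by_cases hx : x ∈ s <;> simp [hx, norm_nonneg]

end helpers

private lemma normc : ‖(1 / ((Real.pi:ℂ) * Complex.I))‖ = 1/Real.pi := by
  rw [norm_div, norm_one, norm_mul, Complex.norm_I, mul_one, Complex.norm_real,
    Real.norm_eq_abs, abs_of_pos Real.pi_pos]

private lemma caseC (p : ℝ≥0∞) [Fact (1 ≤ p)] (hp1 : 1 < p) (hp2 : p ≠ ⊤)
    (S : OpSp p)
    (hS : ∀ (u : LpSp p) (V : Set ℝ), IsOpen V →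
      ((u : ℝ → ℂ) =ᵐ[volume.restrict V] 0) →
      (∀ᵐ x ∂(volume.restrict V),
        (S u : ℝ → ℂ) x = (1 / ((Real.pi : ℂ) * Complex.I)) *
          ∫ y : ℝ, (u : ℝ → ℂ) y / ((y : ℂ) - (x : ℂ))))
    (P : ℕ → OpSp p)
    (hP : ∀ n : ℕ, IsMulOp p (Set.indicator (Set.Icc (-(n : ℝ)) (n : ℝ)) fun _ => (1 : ℂ)) (P n))
    (m : ℕ) :
    Tendsto (fun n : ℕ => ‖(1 - P n) * S * P m‖) atTop (𝓝 0) := by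
  have hp0 : p ≠ 0 := (zero_lt_one.trans hp1).ne'
  set pr := p.toReal with hprdef
  have hpr1 : 1 < pr := by
    rw [hprdef, ← ENNReal.toReal_one]
    exact (ENNReal.toReal_lt_toReal (by simp) hp2).mpr hp1
  set qr := pr.conjExponent with hqrdef
  have hpq : pr.HolderConjugate qr := Real.HolderConjugate.conjExponent hpr1
  have hqr0 : 0 < qr := hpq.symm.pos
  set Em : Set ℝ := Icc (-(m:ℝ)) (m:ℝ) with hEm
  have hEmmeas : MeasurableSet Em := measurableSet_Icc
  have hEmvol : volume Em ≠ ⊤ := by rw [hEm, Real.volume_Icc]; exact ENNReal.ofReal_ne_top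
  set V : Set ℝ := Emᶜ with hV
  have hVmeas : MeasurableSet V := hEmmeas.compl
  have hVopen : IsOpen V := isOpen_compl_iff.mpr isClosed_Icc
  set K : ℕ → ℝ≥0∞ := fun n =>
    eLpNorm (((Icc (-(n:ℝ)) (n:ℝ))ᶜ).indicator fun x => (|x| - (m:ℝ))⁻¹) p volume with hKdef
  have hKten : Tendsto K atTop (𝓝 0) := tail_tendsto p hp1 hp2 m
  set c1 : ℝ≥0∞ := ENNReal.ofReal (1/Real.pi) * (volume Em) ^ (1/qr) with hc1
  have hc1top : c1 ≠ ⊤ :=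
    ENNReal.mul_ne_top ENNReal.ofReal_ne_top (ENNReal.rpow_ne_top_of_nonneg (by positivity) hEmvol)
  set E : ℕ → ℝ≥0∞ := fun n => c1 * K n with hE
  have hEten : Tendsto E atTop (𝓝 0) := by
    have := ENNReal.Tendsto.const_mul hKten (Or.inr hc1top)
    simpa using this
  haveI : IsFiniteMeasure (volume.restrict Em) :=
    ⟨by rw [Measure.restrict_apply_univ]; exact hEmvol.lt_top⟩
  have key : ∀ n : ℕ, m + 1 ≤ n → ∀ u : LpSp p,
      eLpNorm ((((1 - P n) * S * P m) u : LpSp p) : ℝ → ℂ) p volume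
        ≤ E n * eLpNorm (u : ℝ → ℂ) p volume := by
    intro n hn u
    have hnm : (m:ℝ) + 1 ≤ (n:ℝ) := by exact_mod_cast hn
    set v : LpSp p := P m u with hvdef
    have h_v : (v : ℝ → ℂ) =ᵐ[volume]
        fun y => Em.indicator (fun _ => (1:ℂ)) y * (u : ℝ → ℂ) y := hP m u
    have hv0 : (v : ℝ → ℂ) =ᵐ[volume.restrict V] 0 := by
      filter_upwards [ae_restrict_of_ae h_v, ae_restrict_mem hVmeas] with y hy1 hy2
      rw [hy1, indicator_of_notMem hy2, zero_mul]
      rfl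
    have hSv := (ae_restrict_iff' hVmeas).mp (hS v V hVopen hv0)
    have hvInt : Integrable (v : ℝ → ℂ) volume := by
      have h_v' : (v : ℝ → ℂ) =ᵐ[volume] Em.indicator ((u : ℝ → ℂ)) := by
        filter_upwards [h_v] with y hy
        rw [hy]; by_cases hys : y ∈ Em <;> simp [hys]
      rw [integrable_congr h_v', integrable_indicator_iff hEmmeas]
      exact ((Lp.memLp u).restrict Em).integrable hp1.le
    set c0 : ℝ := (1/Real.pi) * ∫ y, ‖(v : ℝ → ℂ) y‖ with hc0
    have hc0nonneg : 0 ≤ c0 :=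
      mul_nonneg (by positivity) (integral_nonneg fun y => norm_nonneg _)
    set An : Set ℝ := (Icc (-(n:ℝ)) (n:ℝ))ᶜ with hAn
    set ind : ℝ → ℝ := An.indicator fun x => (|x| - (m:ℝ))⁻¹ with hinddef
    have hAnV : An ⊆ V := by
      rw [hAn, hV, hEm]
      apply compl_subset_compl.mpr
      exact Icc_subset_Icc (by push_cast; linarith) (by push_cast; linarith)
    have hTu : (((1 - P n) * S * P m) u : LpSp p) = (1 - P n) (S v) := by
      simp [ContinuousLinearMap.mul_apply, hvdef]
    have hcoe : ((((1 - P n) * S * P m) u : LpSp p) : ℝ → ℂ) =ᵐ[volume]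
        fun x => An.indicator (fun _ => (1:ℂ)) x * (S v : ℝ → ℂ) x := by
      rw [hTu]; exact coeQ p P hP n (S v)
    have hbound : ∀ᵐ x ∂volume,
        ‖((((1 - P n) * S * P m) u : LpSp p) : ℝ → ℂ) x‖ ≤ c0 * ind x := by
      filter_upwards [hcoe, hSv] with x hx1 hx2
      by_cases hxA : x ∈ An
      · have hxabs : (n:ℝ) < |x| := by
          have hx' := hxA
          rw [hAn] at hx'
          simp only [mem_compl_iff, mem_Icc, not_and_or, not_le] at hx'
          rcases hx' with h | h
          · exact lt_abs.mpr (Or.inr (by linarith))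
          · exact lt_abs.mpr (Or.inl h)
        have hxm : (m:ℝ) < |x| := by linarith
        have hz := hx2 (hAnV hxA)
        rw [hx1, indicator_of_mem hxA, one_mul, hz, norm_mul, normc,
          hinddef, indicator_of_mem hxA]
        have hInt2 : Integrable (fun y => ‖(v : ℝ → ℂ) y‖ * (|x| - (m:ℝ))⁻¹) volume :=
          hvInt.norm.mul_const _
        have hstep : ‖∫ y, (v : ℝ → ℂ) y / ((y:ℂ) - (x:ℂ))‖
            ≤ (∫ y, ‖(v : ℝ → ℂ) y‖) * (|x| - (m:ℝ))⁻¹ := by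
          refine le_trans (norm_integral_le_integral_norm _) ?_
          rw [← integral_mul_const]
          refine integral_mono_of_nonneg (Eventually.of_forall fun y => norm_nonneg _) hInt2 ?_
          filter_upwards [h_v] with y hy
          by_cases hym : y ∈ Em
          · have hym' := hym
            rw [hEm, mem_Icc] at hym'
            have hyabs : |y| ≤ (m:ℝ) := abs_le.mpr ⟨hym'.1, hym'.2⟩
            have hyx : (|x| - (m:ℝ)) ≤ ‖(y:ℂ) - (x:ℂ)‖ := by
              have hcast : ((y:ℂ) - (x:ℂ)) = ((y - x : ℝ) : ℂ) := by push_cast; ring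
              rw [hcast, Complex.norm_real, Real.norm_eq_abs]
              have h1 : |x| - |y| ≤ |x - y| := abs_sub_abs_le_abs_sub x y
              rw [abs_sub_comm] at h1
              linarith
            rw [norm_div, div_eq_mul_inv]
            exact mul_le_mul_of_nonneg_left
              (inv_anti₀ (by linarith) hyx) (norm_nonneg _)
          · have hv0' : (v : ℝ → ℂ) y = 0 := by
              rw [hy, indicator_of_notMem hym, zero_mul]
            simp only [hv0', zero_div, norm_zero, zero_mul, le_refl]
        calc (1/Real.pi) * ‖∫ y, (v : ℝ → ℂ) y / ((y:ℂ) - (x:ℂ))‖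
            ≤ (1/Real.pi) * ((∫ y, ‖(v : ℝ → ℂ) y‖) * (|x| - (m:ℝ))⁻¹) :=
              mul_le_mul_of_nonneg_left hstep (by positivity)
          _ = c0 * (|x| - (m:ℝ))⁻¹ := by rw [hc0]; ring
      · rw [hx1, indicator_of_notMem hxA, zero_mul, norm_zero, hinddef,
          indicator_of_notMem hxA, mul_zero]
    have h1 : eLpNorm ((((1 - P n) * S * P m) u : LpSp p) : ℝ → ℂ) p volume
        ≤ eLpNorm (fun x => c0 * ind x) p volume := by
      refine eLpNorm_mono_ae ?_
      filter_upwards [hbound] with x hx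
      rw [Real.norm_eq_abs]
      exact le_trans hx (le_abs_self _)
    have h2 : eLpNorm (fun x => c0 * ind x) p volume = (‖c0‖₊ : ℝ≥0∞) * K n := by
      have hsm : (fun x => c0 * ind x) = c0 • ind := by funext x; simp [smul_eq_mul]
      rw [hsm, eLpNorm_const_smul]
      rfl
    have h3 : (‖c0‖₊ : ℝ≥0∞)
        ≤ ENNReal.ofReal (1/Real.pi)
          * (eLpNorm ((v : ℝ → ℂ)) p volume * (volume Em) ^ (1/qr)) := by
      rw [← enorm_eq_nnnorm, Real.enorm_eq_ofReal hc0nonneg, hc0, ENNReal.ofReal_mul (by positivity),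
        ofReal_integral_norm_eq_lintegral_enorm hvInt]
      refine mul_le_mul_right ?_ _
      have hcongr : ∫⁻ y, (‖(v : ℝ → ℂ) y‖₊ : ℝ≥0∞) ∂volume
          = ∫⁻ y, ((fun y => (‖(v : ℝ → ℂ) y‖₊ : ℝ≥0∞))
              * fun y => Em.indicator (fun _ => (1:ℝ≥0∞)) y) y ∂volume := by
        refine lintegral_congr_ae ?_
        filter_upwards [h_v] with y hy
        by_cases hym : y ∈ Em
        · simp [hym]
        · have hv0' : (v : ℝ → ℂ) y = 0 := by
            rw [hy, indicator_of_notMem hym, zero_mul]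
          simp [hym, hv0']
      rw [show (∫⁻ y, ‖(v : ℝ → ℂ) y‖ₑ) = _ from hcongr]
      refine le_trans (ENNReal.lintegral_mul_le_Lp_mul_Lq volume hpq
        (Lp.aestronglyMeasurable v).enorm
        ((measurable_const.indicator hEmmeas).aemeasurable)) ?_
      have e1 : (∫⁻ y, (‖(v : ℝ → ℂ) y‖₊ : ℝ≥0∞) ^ pr ∂volume) ^ (1/pr)
          = eLpNorm ((v : ℝ → ℂ)) p volume :=
        (eLpNorm_eq_lintegral_rpow_enorm_toReal (f := (v : ℝ → ℂ)) hp0 hp2).symm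
      have e2 : (∫⁻ y, (Em.indicator (fun _ => (1:ℝ≥0∞)) y) ^ qr ∂volume) ^ (1/qr)
          = (volume Em) ^ (1/qr) := by
        have : ∀ y, (Em.indicator (fun _ => (1:ℝ≥0∞)) y) ^ qr
            = Em.indicator (fun _ => (1:ℝ≥0∞)) y := by
          intro y
          by_cases hym : y ∈ Em <;>
            simp [hym, ENNReal.zero_rpow_of_pos hqr0]
        simp_rw [this]
        rw [lintegral_indicator hEmmeas, setLIntegral_one]
      rw [e1, e2]
    have h4 : eLpNorm ((v : ℝ → ℂ)) p volume ≤ eLpNorm ((u : ℝ → ℂ)) p volume := by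
      rw [eLpNorm_congr_ae h_v]
      exact eLpNorm_indmul_le p Em _
    calc eLpNorm ((((1 - P n) * S * P m) u : LpSp p) : ℝ → ℂ) p volume
        ≤ (‖c0‖₊ : ℝ≥0∞) * K n := h2 ▸ h1
      _ ≤ (ENNReal.ofReal (1/Real.pi)
          * (eLpNorm ((u : ℝ → ℂ)) p volume * (volume Em) ^ (1/qr))) * K n := by
          refine mul_le_mul_left (le_trans h3 ?_) _
          exact mul_le_mul_right (mul_le_mul_left h4 _) _
      _ = E n * eLpNorm ((u : ℝ → ℂ)) p volume := by rw [hE, hc1]; ring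
  have hbound2 : ∀ᶠ n in atTop, ‖(1 - P n) * S * P m‖ ≤ (E n).toReal := by
    filter_upwards [eventually_ge_atTop (m+1),
      ENNReal.tendsto_nhds_zero.mp hEten 1 zero_lt_one] with n hn hE1
    have hEtop : E n ≠ ⊤ := (lt_of_le_of_lt hE1 ENNReal.one_lt_top).ne
    refine ContinuousLinearMap.opNorm_le_bound _ ENNReal.toReal_nonneg fun u => ?_
    rw [Lp.norm_def, Lp.norm_def, ← ENNReal.toReal_mul]
    refine ENNReal.toReal_mono (ENNReal.mul_ne_top hEtop (Lp.eLpNorm_ne_top u)) ?_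
    exact key n hn u
  refine squeeze_zero' (Eventually.of_forall fun n => norm_nonneg _) hbound2 ?_
  have := (ENNReal.tendsto_toReal (a := 0) (by simp)).comp hEten
  simpa [Function.comp_def] using this

private lemma caseB (p : ℝ≥0∞) [Fact (1 ≤ p)] (hp1 : 1 < p) (hp2 : p ≠ ⊤)
    (S : OpSp p)
    (hS : ∀ (u : LpSp p) (V : Set ℝ), IsOpen V →
      ((u : ℝ → ℂ) =ᵐ[volume.restrict V] 0) →
      (∀ᵐ x ∂(volume.restrict V),
        (S u : ℝ → ℂ) x = (1 / ((Real.pi : ℂ) * Complex.I)) *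
          ∫ y : ℝ, (u : ℝ → ℂ) y / ((y : ℂ) - (x : ℂ))))
    (P : ℕ → OpSp p)
    (hP : ∀ n : ℕ, IsMulOp p (Set.indicator (Set.Icc (-(n : ℝ)) (n : ℝ)) fun _ => (1 : ℂ)) (P n))
    (m : ℕ) :
    Tendsto (fun n : ℕ => ‖P m * S * (1 - P n)‖) atTop (𝓝 0) := by
  have hp0 : p ≠ 0 := (zero_lt_one.trans hp1).ne'
  set pr := p.toReal with hprdef
  have hpr1 : 1 < pr := by
    rw [hprdef, ← ENNReal.toReal_one]
    exact (ENNReal.toReal_lt_toReal (by simp) hp2).mpr hp1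
  set qr := pr.conjExponent with hqrdef
  have hpq : pr.HolderConjugate qr := Real.HolderConjugate.conjExponent hpr1
  have hqr1 : 1 < qr := hpq.symm.lt
  set q : ℝ≥0∞ := ENNReal.ofReal qr with hqdef
  have hq2 : q ≠ ⊤ := ENNReal.ofReal_ne_top
  have hq1 : 1 < q := by
    rw [hqdef, ← ENNReal.ofReal_one]
    exact (ENNReal.ofReal_lt_ofReal_iff (by linarith)).mpr hqr1
  have hq0 : q ≠ 0 := (zero_lt_one.trans hq1).ne'
  have hqtr : q.toReal = qr := ENNReal.toReal_ofReal (by linarith)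
  set Em : Set ℝ := Icc (-(m:ℝ)) (m:ℝ) with hEm
  have hEmmeas : MeasurableSet Em := measurableSet_Icc
  have hEmvol : volume Em ≠ ⊤ := by rw [hEm, Real.volume_Icc]; exact ENNReal.ofReal_ne_top
  set K : ℕ → ℝ≥0∞ := fun n =>
    eLpNorm (((Icc (-(n:ℝ)) (n:ℝ))ᶜ).indicator fun x => (|x| - (m:ℝ))⁻¹) q volume with hKdef
  have hKten : Tendsto K atTop (𝓝 0) := tail_tendsto q hq1 hq2 m
  set c1 : ℝ≥0∞ := ENNReal.ofReal (1/Real.pi) * (volume Em) ^ (1/pr) with hc1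
  have hc1top : c1 ≠ ⊤ :=
    ENNReal.mul_ne_top ENNReal.ofReal_ne_top (ENNReal.rpow_ne_top_of_nonneg (by positivity) hEmvol)
  set E : ℕ → ℝ≥0∞ := fun n => c1 * K n with hE
  have hEten : Tendsto E atTop (𝓝 0) := by
    have := ENNReal.Tendsto.const_mul hKten (Or.inr hc1top)
    simpa using this
  have key : ∀ n : ℕ, m + 1 ≤ n → K n ≠ ⊤ → ∀ u : LpSp p,
      eLpNorm (((P m * S * (1 - P n)) u : LpSp p) : ℝ → ℂ) p volume
        ≤ E n * eLpNorm (u : ℝ → ℂ) p volume := by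
    intro n hn hKn u
    have hnm : (m:ℝ) + 1 ≤ (n:ℝ) := by exact_mod_cast hn
    set v : LpSp p := (1 - P n) u with hvdef
    set An : Set ℝ := (Icc (-(n:ℝ)) (n:ℝ))ᶜ with hAn
    set ind : ℝ → ℝ := An.indicator fun y => (|y| - (m:ℝ))⁻¹ with hinddef
    have h_v : (v : ℝ → ℂ) =ᵐ[volume]
        fun y => An.indicator (fun _ => (1:ℂ)) y * (u : ℝ → ℂ) y := coeQ p P hP n u
    set V : Set ℝ := Ioo (-(n:ℝ)) (n:ℝ) with hV
    have hVmeas : MeasurableSet V := measurableSet_Ioo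
    have hv0 : (v : ℝ → ℂ) =ᵐ[volume.restrict V] 0 := by
      filter_upwards [ae_restrict_of_ae h_v, ae_restrict_mem hVmeas] with y hy1 hy2
      have hyA : y ∉ An := by
        rw [hAn, mem_compl_iff, not_not]
        exact Ioo_subset_Icc_self hy2
      rw [hy1, indicator_of_notMem hyA, zero_mul]
      rfl
    have hSv := (ae_restrict_iff' hVmeas).mp (hS v V isOpen_Ioo hv0)
    set C1 : ℝ := (1/Real.pi)
      * ((eLpNorm ((v : ℝ → ℂ)) p volume) * K n).toReal with hC1
    have hC1nonneg : 0 ≤ C1 := mul_nonneg (by positivity) ENNReal.toReal_nonneg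
    have hTu : ((P m * S * (1 - P n)) u : LpSp p) = (P m) (S v) := by
      simp [ContinuousLinearMap.mul_apply, hvdef]
    have hcoe : (((P m * S * (1 - P n)) u : LpSp p) : ℝ → ℂ) =ᵐ[volume]
        fun x => Em.indicator (fun _ => (1:ℂ)) x * (S v : ℝ → ℂ) x := by
      rw [hTu]; exact hP m (S v)
    have hbound : ∀ᵐ x ∂volume,
        ‖(((P m * S * (1 - P n)) u : LpSp p) : ℝ → ℂ) x‖
          ≤ Em.indicator (fun _ => C1) x := by
      filter_upwards [hcoe, hSv] with x hx1 hx2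
      by_cases hxE : x ∈ Em
      · have hxE' := hxE
        rw [hEm, mem_Icc] at hxE'
        have hxabs : |x| ≤ (m:ℝ) := abs_le.mpr ⟨hxE'.1, hxE'.2⟩
        have hxV : x ∈ V := by
          rw [hV, mem_Ioo]
          constructor <;> linarith [hxE'.1, hxE'.2]
        have hz := hx2 hxV
        rw [hx1, indicator_of_mem hxE, one_mul, hz, norm_mul, normc,
          indicator_of_mem hxE]
        -- estimate the integral via the lintegral and Hölder
        have hstep1 : ‖∫ y, (v : ℝ → ℂ) y / ((y:ℂ) - (x:ℂ))‖
            ≤ (∫⁻ y, ENNReal.ofReal ‖(v : ℝ → ℂ) y / ((y:ℂ) - (x:ℂ))‖ ∂volume).toReal :=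
          norm_integral_le_lintegral_norm _
        have hstep2 : ∫⁻ y, ENNReal.ofReal ‖(v : ℝ → ℂ) y / ((y:ℂ) - (x:ℂ))‖ ∂volume
            ≤ eLpNorm ((v : ℝ → ℂ)) p volume * K n := by
          have hmono : ∫⁻ y, ENNReal.ofReal ‖(v : ℝ → ℂ) y / ((y:ℂ) - (x:ℂ))‖ ∂volume
              ≤ ∫⁻ y, ((fun y => (‖(v : ℝ → ℂ) y‖₊ : ℝ≥0∞))
                  * fun y => (‖ind y‖₊ : ℝ≥0∞)) y ∂volume := by
            refine lintegral_mono_ae ?_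
            filter_upwards [h_v] with y hy
            by_cases hyA : y ∈ An
            · have hyabs : (n:ℝ) < |y| := by
                have hy' := hyA
                rw [hAn] at hy'
                simp only [mem_compl_iff, mem_Icc, not_and_or, not_le] at hy'
                rcases hy' with h | h
                · exact lt_abs.mpr (Or.inr (by linarith))
                · exact lt_abs.mpr (Or.inl h)
              have hym : (m:ℝ) < |y| := by linarith
              have hyx : (|y| - (m:ℝ)) ≤ ‖(y:ℂ) - (x:ℂ)‖ := by
                have hcast : ((y:ℂ) - (x:ℂ)) = ((y - x : ℝ) : ℂ) := by push_cast; ring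
                rw [hcast, Complex.norm_real, Real.norm_eq_abs]
                have h1 : |y| - |x| ≤ |y - x| := abs_sub_abs_le_abs_sub y x
                linarith
              have hindy : ind y = (|y| - (m:ℝ))⁻¹ := by
                rw [hinddef, indicator_of_mem hyA]
              have hreal : ‖(v : ℝ → ℂ) y / ((y:ℂ) - (x:ℂ))‖
                  ≤ ‖(v : ℝ → ℂ) y‖ * ind y := by
                rw [norm_div, div_eq_mul_inv, hindy]
                exact mul_le_mul_of_nonneg_left
                  (inv_anti₀ (by linarith) hyx) (norm_nonneg _)
              refine le_trans (ENNReal.ofReal_le_ofReal hreal) ?_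
              rw [ENNReal.ofReal_mul (norm_nonneg _), Pi.mul_apply]
              rw [ofReal_norm_eq_enorm]
              refine mul_le_mul_right ?_ _
              rw [← enorm_eq_nnnorm, Real.enorm_eq_ofReal_abs]
              exact ENNReal.ofReal_le_ofReal (le_abs_self _)
            · have hv0' : (v : ℝ → ℂ) y = 0 := by
                rw [hy, indicator_of_notMem hyA, zero_mul]
              simp [hv0']
          refine le_trans hmono ?_
          refine le_trans (ENNReal.lintegral_mul_le_Lp_mul_Lq volume hpq
            (Lp.aestronglyMeasurable v).enorm ?_) ?_
          · refine AEMeasurable.coe_nnreal_ennreal (Measurable.aemeasurable ?_)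
            refine Measurable.nnnorm ?_
            rw [hinddef]
            exact ((measurable_abs.sub measurable_const).inv).indicator
              (measurableSet_Icc.compl)
          · have e1 : (∫⁻ y, (‖(v : ℝ → ℂ) y‖₊ : ℝ≥0∞) ^ pr ∂volume) ^ (1/pr)
                = eLpNorm ((v : ℝ → ℂ)) p volume :=
              (eLpNorm_eq_lintegral_rpow_enorm_toReal (f := (v : ℝ → ℂ)) hp0 hp2).symm
            have e2 : (∫⁻ y, (‖ind y‖₊ : ℝ≥0∞) ^ qr ∂volume) ^ (1/qr) = K n := by
              have hKn' : K n = eLpNorm ind q volume := rfl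
              rw [hKn', eLpNorm_eq_lintegral_rpow_enorm_toReal hq0 hq2, hqtr]
              rfl
            rw [e1, e2]
        have hfin : eLpNorm ((v : ℝ → ℂ)) p volume * K n ≠ ⊤ :=
          ENNReal.mul_ne_top (Lp.eLpNorm_ne_top v) hKn
        calc (1/Real.pi) * ‖∫ y, (v : ℝ → ℂ) y / ((y:ℂ) - (x:ℂ))‖
            ≤ (1/Real.pi)
              * ((eLpNorm ((v : ℝ → ℂ)) p volume * K n).toReal) := by
              refine mul_le_mul_of_nonneg_left ?_ (by positivity)
              exact le_trans hstep1 (ENNReal.toReal_mono hfin hstep2)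
          _ = C1 := by rw [hC1]
      · rw [hx1, indicator_of_notMem hxE, zero_mul, norm_zero,
          indicator_of_notMem hxE]
    have h1 : eLpNorm (((P m * S * (1 - P n)) u : LpSp p) : ℝ → ℂ) p volume
        ≤ eLpNorm (Em.indicator (fun _ => C1)) p volume := by
      refine eLpNorm_mono_ae ?_
      filter_upwards [hbound] with x hx
      rw [Real.norm_eq_abs]
      exact le_trans hx (le_abs_self _)
    have h2 : eLpNorm (Em.indicator (fun _ => C1) : ℝ → ℝ) p volume
        = (‖C1‖₊ : ℝ≥0∞) * (volume Em) ^ (1/pr) :=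
      eLpNorm_indicator_const hEmmeas hp0 hp2
    have h3 : (‖C1‖₊ : ℝ≥0∞)
        ≤ ENNReal.ofReal (1/Real.pi) * (eLpNorm ((v : ℝ → ℂ)) p volume * K n) := by
      rw [← enorm_eq_nnnorm, Real.enorm_eq_ofReal hC1nonneg, hC1, ENNReal.ofReal_mul (by positivity)]
      exact mul_le_mul_right ENNReal.ofReal_toReal_le _
    have h4 : eLpNorm ((v : ℝ → ℂ)) p volume ≤ eLpNorm ((u : ℝ → ℂ)) p volume := by
      rw [eLpNorm_congr_ae h_v]
      exact eLpNorm_indmul_le p An _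
    calc eLpNorm (((P m * S * (1 - P n)) u : LpSp p) : ℝ → ℂ) p volume
        ≤ (‖C1‖₊ : ℝ≥0∞) * (volume Em) ^ (1/pr) := h2 ▸ h1
      _ ≤ (ENNReal.ofReal (1/Real.pi) * (eLpNorm ((u : ℝ → ℂ)) p volume * K n))
            * (volume Em) ^ (1/pr) := by
          refine mul_le_mul_left (le_trans h3 ?_) _
          exact mul_le_mul_right (mul_le_mul_left h4 _) _
      _ = E n * eLpNorm ((u : ℝ → ℂ)) p volume := by rw [hE, hc1]; ring
  have hbound2 : ∀ᶠ n in atTop, ‖P m * S * (1 - P n)‖ ≤ (E n).toReal := by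
    filter_upwards [eventually_ge_atTop (m+1),
      ENNReal.tendsto_nhds_zero.mp hKten 1 zero_lt_one,
      ENNReal.tendsto_nhds_zero.mp hEten 1 zero_lt_one] with n hn hK1 hE1
    have hKtop : K n ≠ ⊤ := (lt_of_le_of_lt hK1 ENNReal.one_lt_top).ne
    have hEtop : E n ≠ ⊤ := (lt_of_le_of_lt hE1 ENNReal.one_lt_top).ne
    refine ContinuousLinearMap.opNorm_le_bound _ ENNReal.toReal_nonneg fun u => ?_
    rw [Lp.norm_def, Lp.norm_def, ← ENNReal.toReal_mul]
    refine ENNReal.toReal_mono (ENNReal.mul_ne_top hEtop (Lp.eLpNorm_ne_top u)) ?_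
    exact key n hn hKtop u
  refine squeeze_zero' (Eventually.of_forall fun n => norm_nonneg _) hbound2 ?_
  have := (ENNReal.tendsto_toReal (a := 0) (by simp)).comp hEten
  simpa [Function.comp_def] using this

end Aux

/-- if `S` is a bounded operator on `L^p(ℝ)`, `1 < p < ∞`, acting as the Cauchy
singular integral `(S u)(x) = (1/(πi)) ∫ u(y)/(y-x) dy` a.e. on any open set where `u` vanishes
a.e., then `‖P_m S Q_n‖ → 0` and `‖Q_n S P_m‖ → 0` as `n → ∞`, for every `m`; i.e. `S` belongs
to `L(L^p(ℝ), P)`. -/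
theorem stmt_6 (p : ℝ≥0∞) [Fact (1 ≤ p)] (hp1 : 1 < p) (hp2 : p ≠ ⊤)
    (S : OpSp p)
    (hS : ∀ (u : LpSp p) (V : Set ℝ), IsOpen V →
      ((u : ℝ → ℂ) =ᵐ[volume.restrict V] 0) →
      (∀ᵐ x ∂(volume.restrict V),
        (S u : ℝ → ℂ) x = (1 / ((Real.pi : ℂ) * Complex.I)) *
          ∫ y : ℝ, (u : ℝ → ℂ) y / ((y : ℂ) - (x : ℂ))))
    (P : ℕ → OpSp p)
    (hP : ∀ n : ℕ, IsMulOp p (Set.indicator (Set.Icc (-(n : ℝ)) (n : ℝ)) fun _ => (1 : ℂ)) (P n)) :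
    ∀ m : ℕ,
      Tendsto (fun n : ℕ => ‖P m * S * (1 - P n)‖) atTop (𝓝 0) ∧
      Tendsto (fun n : ℕ => ‖(1 - P n) * S * P m‖) atTop (𝓝 0) := by
  intro m
  exact ⟨caseB p hp1 hp2 S hS P hP m, caseC p hp1 hp2 S hS P hP m⟩
end
end

section
/- Let a : ℝ → ℂ be a bounded function which is slowly oscillating at infinity, i.e. for every r ∈ (0,1) one has osc(a, [−x, −rx] ∪ [rx, x]) → 0 as x → +∞. Let (l_n) be a sequence of positive real numbers with l_n → +∞, and suppose x_0 ∈ ℝ ∖ {0} and a_0 ∈ ℂ are such that a(l_n x_0) → a_0 as n → ∞. Then for all real numbers 0 < r ≤ R, sup{ |a(l_n x) − a_0| : x ∈ ℝ, r ≤ |x| ≤ R } → 0 as n → ∞. -/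
open Filter Topology

/-- if `a : ℝ → ℂ` is bounded and slowly oscillating at infinity, `l n → +∞`,
`l n > 0`, and `a (l n * x₀) → a₀` for some fixed `x₀ ≠ 0`, then `a (l n * x) → a₀`
uniformly on every annulus `{x : r ≤ |x| ≤ R}` with `0 < r ≤ R`.
(Both the slow-oscillation hypothesis `osc(a, [-x,-rx] ∪ [rx,x]) → 0` and the uniform-
convergence conclusion `sup → 0` are spelled out in `ε`-form.) -/
theorem stmt_7 (a : ℝ → ℂ) (C : ℝ) (hbd : ∀ x : ℝ, ‖a x‖ ≤ C)
    (hso : ∀ r : ℝ, 0 < r → r < 1 → ∀ ε : ℝ, 0 < ε → ∀ᶠ x : ℝ in atTop,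
      ∀ s ∈ Set.Icc (-x) (-(r * x)) ∪ Set.Icc (r * x) x,
      ∀ t ∈ Set.Icc (-x) (-(r * x)) ∪ Set.Icc (r * x) x, ‖a t - a s‖ ≤ ε)
    (l : ℕ → ℝ) (hlpos : ∀ n, 0 < l n) (hl : Tendsto l atTop atTop)
    (x₀ : ℝ) (hx₀ : x₀ ≠ 0) (a₀ : ℂ)
    (ha₀ : Tendsto (fun n => a (l n * x₀)) atTop (𝓝 a₀))
    (r R : ℝ) (hr : 0 < r) (hrR : r ≤ R) :
    ∀ ε : ℝ, 0 < ε → ∀ᶠ n : ℕ in atTop,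
      ∀ x : ℝ, r ≤ |x| → |x| ≤ R → ‖a (l n * x) - a₀‖ ≤ ε := by
  intro ε hε
  set m := min r |x₀| with hm
  set M := max R |x₀| with hM
  have hx₀' : 0 < |x₀| := abs_pos.mpr hx₀
  have hmpos : 0 < m := lt_min hr hx₀'
  have hMpos : 0 < M := lt_of_lt_of_le hr (le_trans hrR (le_max_left _ _))
  have hmM : m ≤ M := le_trans (min_le_left _ _) (le_trans hrR (le_max_left _ _))
  set ρ := m / (2 * M) with hρ
  have hρpos : 0 < ρ := by positivity
  have hρlt : ρ < 1 := by
    rw [hρ, div_lt_one (by positivity)]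
    nlinarith
  have h1 := hso ρ hρpos hρlt (ε/2) (by positivity)
  have h2 : Tendsto (fun n => l n * M) atTop atTop := hl.atTop_mul_const hMpos
  have h3 := h2.eventually h1
  have h4 : ∀ᶠ n in atTop, ‖a (l n * x₀) - a₀‖ ≤ ε/2 := by
    have := ha₀.eventually (Metric.closedBall_mem_nhds a₀ (by positivity : (0:ℝ) < ε/2))
    filter_upwards [this] with n hn
    simpa [Metric.mem_closedBall, dist_eq_norm] using hn
  filter_upwards [h3, h4] with n hn hn' x hxr hxR
  set X := l n * M with hX
  have hln := hlpos n
  have hmem : ∀ y : ℝ, m ≤ |y| → |y| ≤ M →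
      l n * y ∈ Set.Icc (-X) (-(ρ * X)) ∪ Set.Icc (ρ * X) X := by
    intro y hy1 hy2
    have hρX : ρ * X = l n * m / 2 := by
      rw [hρ, hX]; field_simp
    have habs1 : ρ * X ≤ |l n * y| := by
      rw [hρX, abs_mul, abs_of_pos hln]
      nlinarith [abs_nonneg y]
    have habs2 : |l n * y| ≤ X := by
      rw [abs_mul, abs_of_pos hln]
      exact mul_le_mul_of_nonneg_left hy2 hln.le
    rcases le_or_gt 0 (l n * y) with h | h
    · right
      rw [abs_of_nonneg h] at habs1 habs2
      exact ⟨habs1, habs2⟩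
    · left
      rw [abs_of_neg h] at habs1 habs2
      exact ⟨by linarith, by linarith⟩
  have hx0mem := hmem x₀ (min_le_right _ _) (le_max_right _ _)
  have hxmem := hmem x (le_trans (min_le_left _ _) hxr) (le_trans hxR (le_max_left _ _))
  have hkey := hn (l n * x₀) hx0mem (l n * x) hxmem
  have heq : a (l n * x) - a₀ = (a (l n * x) - a (l n * x₀)) + (a (l n * x₀) - a₀) := by
    ring
  rw [heq]
  calc ‖(a (l n * x) - a (l n * x₀)) + (a (l n * x₀) - a₀)‖
      ≤ ‖a (l n * x) - a (l n * x₀)‖ + ‖a (l n * x₀) - a₀‖ := norm_add_le _ _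
    _ ≤ ε/2 + ε/2 := add_le_add hkey hn'
    _ = ε := by ring
end

section
/- Let 1 ≤ p < ∞, let K be a P-compact operator on L^p(ℝ), and let φ : ℝ → ℂ be a bounded measurable function which is continuous at 0. Then ‖K ∘ M_{φ_t} − M_{φ_t} ∘ K‖ → 0 as t → ∞, in the operator norm on L^p(ℝ). -/
open MeasureTheory Filter Topology
open scoped ENNReal

noncomputable section

lemma mulop_norm_le {p : ℝ≥0∞} [Fact (1 ≤ p)] {a : ℝ → ℂ} {N : OpSp p}
    (hN : IsMulOp p a N) {c : ℝ} (hc : 0 ≤ c) (ha : ∀ x, ‖a x‖ ≤ c) : ‖N‖ ≤ c := by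
  refine N.opNorm_le_bound hc fun u => ?_
  have h1 : eLpNorm (N u) p volume = eLpNorm (fun x => a x * (u : ℝ → ℂ) x) p volume :=
    eLpNorm_congr_ae (hN u)
  have h2 : eLpNorm (fun x => a x * (u : ℝ → ℂ) x) p volume
      ≤ eLpNorm ((c : ℂ) • (u : ℝ → ℂ)) p volume := by
    refine eLpNorm_mono fun x => ?_
    simp only [Pi.smul_apply, smul_eq_mul, norm_mul, Complex.norm_real,
      Real.norm_eq_abs, abs_of_nonneg hc]
    exact mul_le_mul_of_nonneg_right (ha x) (norm_nonneg _)
  have h3 : eLpNorm ((c : ℂ) • (u : ℝ → ℂ)) p volume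
      = (‖(c : ℂ)‖₊ : ℝ≥0∞) * eLpNorm (u : ℝ → ℂ) p volume :=
    eLpNorm_const_smul _ _ _ _
  calc ‖N u‖ = (eLpNorm (N u) p volume).toReal := Lp.norm_def _
    _ ≤ ((‖(c : ℂ)‖₊ : ℝ≥0∞) * eLpNorm (u : ℝ → ℂ) p volume).toReal := by
        rw [h1]
        refine ENNReal.toReal_mono ?_ (h3 ▸ h2)
        exact ENNReal.mul_ne_top ENNReal.coe_ne_top (Lp.eLpNorm_ne_top u)
    _ = c * ‖u‖ := by
        rw [ENNReal.toReal_mul, Lp.norm_def]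
        simp [abs_of_nonneg hc]

lemma isMulOp_mul {p : ℝ≥0∞} [Fact (1 ≤ p)] {a b : ℝ → ℂ} {S T : OpSp p}
    (hS : IsMulOp p a S) (hT : IsMulOp p b T) :
    IsMulOp p (fun x => a x * b x) (S * T) := by
  intro u
  have h1 := hS (T u)
  have h2 : (fun x => a x * (T u : ℝ → ℂ) x) =ᵐ[volume]
      fun x => a x * (b x * (u : ℝ → ℂ) x) := by
    filter_upwards [hT u] with x hx
    rw [hx]
  refine (h1.trans h2).trans ?_
  filter_upwards with x
  ring

lemma isMulOp_sub_smul_one {p : ℝ≥0∞} [Fact (1 ≤ p)] {a : ℝ → ℂ} {S : OpSp p}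
    (hS : IsMulOp p a S) (c : ℂ) :
    IsMulOp p (fun x => a x - c) (S - c • 1) := by
  intro u
  have h0 : ((S - c • 1) u) = S u - c • u := by
    simp [ContinuousLinearMap.sub_apply]
  rw [h0]
  have h1 := Lp.coeFn_sub (S u) (c • u)
  have h2 := Lp.coeFn_smul c u
  filter_upwards [h1, h2, hS u] with x hx1 hx2 hx3
  simp only [Pi.sub_apply] at hx1
  rw [hx1, hx2, hx3]
  simp [sub_mul, mul_comm]

set_option maxHeartbeats 1600000 in
/-- if `K` is a `P`-compact operator on `L^p(ℝ)`, `1 ≤ p < ∞`, and `φ` is a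
bounded measurable function continuous at `0`, then `‖[K, φ_t I]‖ → 0` as `t → ∞`, where
`φ_t = φ(·/t)`. -/
theorem stmt_14 (p : ℝ≥0∞) [Fact (1 ≤ p)] (hp : p ≠ ⊤)
    (P : ℕ → OpSp p)
    (hP : ∀ n : ℕ, IsMulOp p (Set.indicator (Set.Icc (-(n : ℝ)) (n : ℝ)) fun _ => (1 : ℂ)) (P n))
    (K : OpSp p)
    (hK1 : Tendsto (fun n : ℕ => ‖K * (1 - P n)‖) atTop (𝓝 0))
    (hK2 : Tendsto (fun n : ℕ => ‖(1 - P n) * K‖) atTop (𝓝 0))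
    (φ : ℝ → ℂ) (hφm : Measurable φ) (C : ℝ) (hφbd : ∀ x : ℝ, ‖φ x‖ ≤ C)
    (hφ0 : ContinuousAt φ 0)
    (M : ℝ → OpSp p)
    (hM : ∀ t : ℝ, 0 < t → IsMulOp p (fun x => φ (x / t)) (M t)) :
    Tendsto (fun t : ℝ => ‖K * M t - M t * K‖) atTop (𝓝 0) := by
  -- notation
  set c : ℂ := φ 0 with hc
  set D : ℝ := C + 1 with hD
  have hD0 : 0 < D := by
    have := (norm_nonneg (φ 0)).trans (hφbd 0); linarith
  have hφD : ∀ x, ‖φ x‖ ≤ D := fun x => (hφbd x).trans (by linarith)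
  -- A t is multiplication by φ(x/t) - φ 0
  have hA : ∀ t : ℝ, 0 < t → IsMulOp p (fun x => φ (x / t) - c) (M t - c • 1) :=
    fun t ht => isMulOp_sub_smul_one (hM t ht) c
  have hAnorm : ∀ t : ℝ, 0 < t → ‖M t - c • 1‖ ≤ 2 * D := by
    intro t ht
    refine mulop_norm_le (hA t ht) (by linarith) fun x => ?_
    calc ‖φ (x / t) - c‖ ≤ ‖φ (x / t)‖ + ‖c‖ := norm_sub_le _ _
      _ ≤ D + D := add_le_add (hφD _) (hφD 0)
      _ = 2 * D := by ring
  -- the commutator identity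
  have hcomm : ∀ t : ℝ, K * M t - M t * K = K * (M t - c • 1) - (M t - c • 1) * K := by
    intro t
    have h1 : K * (c • (1 : OpSp p)) = (c • (1 : OpSp p)) * K := by
      simp [mul_smul_comm, smul_mul_assoc]
    rw [mul_sub, sub_mul, h1]
    abel
  rw [Metric.tendsto_atTop]
  intro ε hε
  -- choose n
  have hε' : 0 < ε / (16 * D) := by positivity
  obtain ⟨n, hn1, hn2⟩ :
      ∃ n : ℕ, ‖K * (1 - P n)‖ < ε / (16 * D) ∧ ‖(1 - P n) * K‖ < ε / (16 * D) := by
    have h1 := hK1.eventually (gt_mem_nhds hε')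
    have h2 := hK2.eventually (gt_mem_nhds hε')
    exact (h1.and h2).exists
  -- choose r from continuity at 0
  set δ : ℝ := ε / (8 * (‖K‖ + 1)) with hδdef
  have hδ0 : 0 < δ := by positivity
  obtain ⟨r, hr0, hr⟩ := Metric.continuousAt_iff.mp hφ0 δ hδ0
  refine ⟨max 1 ((n + 1) / r), fun t ht => ?_⟩
  have ht1 : (1 : ℝ) ≤ t := le_trans (le_max_left _ _) ht
  have ht0 : 0 < t := by linarith
  have htr : (n + 1) / r ≤ t := le_trans (le_max_right _ _) ht
  -- bound on indicator * (φ_t - c)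
  have hbd : ∀ x : ℝ,
      ‖(Set.indicator (Set.Icc (-(n : ℝ)) (n : ℝ)) fun _ => (1 : ℂ)) x * (φ (x / t) - c)‖
        ≤ δ := by
    intro x
    by_cases hx : x ∈ Set.Icc (-(n : ℝ)) (n : ℝ)
    · rw [Set.indicator_of_mem hx, one_mul]
      have hxa : |x| ≤ (n : ℝ) := abs_le.mpr ⟨hx.1, hx.2⟩
      have hdist : dist (x / t) 0 < r := by
        rw [dist_zero_right, Real.norm_eq_abs, abs_div, abs_of_pos ht0]
        have h1 : (n : ℝ) + 1 ≤ r * t := by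
          rwa [div_le_iff₀ hr0, mul_comm] at htr
        have h2 : |x| / t ≤ (n : ℝ) / t := by gcongr
        have h3 : (n : ℝ) / t < r := by
          rw [div_lt_iff₀ ht0]
          nlinarith
        linarith
      have := hr hdist
      rw [dist_eq_norm] at this
      exact this.le
    · rw [Set.indicator_of_notMem hx]
      simpa using hδ0.le
  have hbd' : ∀ x : ℝ,
      ‖(φ (x / t) - c) * (Set.indicator (Set.Icc (-(n : ℝ)) (n : ℝ)) fun _ => (1 : ℂ)) x‖
        ≤ δ := by
    intro x
    rw [mul_comm]
    exact hbd x
  set A : OpSp p := M t - c • 1 with hAdef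
  have hPA : ‖P n * A‖ ≤ δ := mulop_norm_le (isMulOp_mul (hP n) (hA t ht0)) hδ0.le hbd
  have hAP : ‖A * P n‖ ≤ δ := mulop_norm_le (isMulOp_mul (hA t ht0) (hP n)) hδ0.le hbd'
  have hAn : ‖A‖ ≤ 2 * D := hAnorm t ht0
  -- decomposition
  have hdec1 : K * A = K * (P n * A) + (K * (1 - P n)) * A := by
    rw [← mul_assoc, ← add_mul]
    congr 1
    rw [mul_sub, mul_one]
    abel
  have hdec2 : A * K = (A * P n) * K + A * ((1 - P n) * K) := by
    rw [← mul_assoc A (1 - P n) K, ← add_mul]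
    congr 1
    rw [mul_sub, mul_one]
    abel
  have hKA : ‖K * A‖ ≤ ‖K‖ * δ + (ε / (16 * D)) * (2 * D) := by
    rw [hdec1]
    refine (norm_add_le _ _).trans (add_le_add ?_ ?_)
    · exact (norm_mul_le _ _).trans (mul_le_mul (le_refl _) hPA (norm_nonneg _) (norm_nonneg _))
    · exact (norm_mul_le _ _).trans
        (mul_le_mul hn1.le hAn (norm_nonneg _) (by positivity))
  have hAK : ‖A * K‖ ≤ δ * ‖K‖ + (2 * D) * (ε / (16 * D)) := by
    rw [hdec2]
    refine (norm_add_le _ _).trans (add_le_add ?_ ?_)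
    · exact (norm_mul_le _ _).trans (mul_le_mul hAP (le_refl _) (norm_nonneg _) hδ0.le)
    · exact (norm_mul_le _ _).trans (mul_le_mul hAn hn2.le (norm_nonneg _) (by positivity))
  have hKδ : ‖K‖ * δ ≤ ε / 8 := by
    rw [hδdef]
    rw [mul_div_assoc'] -- ‖K‖ * ε / (8 * (‖K‖+1))
    rw [div_le_div_iff₀ (by positivity) (by norm_num)]
    nlinarith [norm_nonneg K, hε.le]
  have hDε : (ε / (16 * D)) * (2 * D) = ε / 8 := by
    field_simp
    ring
  have := hcomm t
  rw [dist_zero_right, Real.norm_eq_abs, abs_of_nonneg (norm_nonneg _), this]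
  calc ‖K * A - A * K‖ ≤ ‖K * A‖ + ‖A * K‖ := norm_sub_le _ _
    _ ≤ (‖K‖ * δ + ε / 8) + (‖K‖ * δ + ε / 8) := by
        rw [hDε] at hKA
        have : (2 * D) * (ε / (16 * D)) = ε / 8 := by rw [mul_comm]; exact hDε
        rw [this] at hAK
        rw [mul_comm δ ‖K‖] at hAK
        exact add_le_add hKA hAK
    _ ≤ (ε / 8 + ε / 8) + (ε / 8 + ε / 8) := by linarith
    _ < ε := by linarith
end
end
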